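/- arXiv:0811.0366 — 4 statements merged into one kernel-verified Lean document; each statement's English description precedes it below -/
import Mathlib

section
/- (Drift identity and centering of the local drift.) Define the local drift Δ(ω,u) = ∫_ℝ α (∫_Λ κ^ω_{0,u} Φ^ω(0,u,α,v) dμ^ω_α(v)) dα, and assume the first-moment condition ⟨∫_ℝ |α| (∫_Λ κ^ω_{0,u} Φ^ω(0,u,α,v) dμ^ω_α(v)) dα⟩_Q < ∞. Then for every bounded measurable g : Ω×Λ → ℝ, ⟨g, Δ⟩_Q = (1/(2Z)) ∫_ℝ α dα ∫_Ω dP(ω) ∫_{Λ×Λ} Φ^ω(0,u,α,v) (g(ω,u) − g(θ_α ω, v)) dμ^ω_0(u) dμ^ω_α(v). In particular (taking g ≡ 1) the drift has mean zero under the equilibrium law: ⟨Δ⟩_Q = 0. -/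
open MeasureTheory ProbabilityTheory
open scoped ENNReal NNReal

lemma isSFiniteKernel_of_finite {α β : Type*} [MeasurableSpace α] [MeasurableSpace β]
    (K : Kernel α β) (h : ∀ a, IsFiniteMeasure (K a)) : IsSFiniteKernel K := by
  classical
  set s : ℕ → Set α := fun n =>
    (fun a => K a Set.univ) ⁻¹' Set.Ico (n : ℝ≥0∞) ((n : ℝ≥0∞) + 1) with hs
  have hsm : ∀ n, MeasurableSet (s n) :=
    fun n => K.measurable_coe MeasurableSet.univ measurableSet_Ico
  have hmem : ∀ a, ∀ n : ℕ, a ∈ s n ↔ n = ⌊(K a Set.univ).toReal⌋₊ := by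
    intro a n
    have hfin : K a Set.univ ≠ ⊤ := (h a).measure_univ_lt_top.ne
    have hn1 : (n : ℝ≥0∞) = ENNReal.ofReal (n : ℝ) := by simp
    have hn2 : (n : ℝ≥0∞) + 1 = ENNReal.ofReal ((n : ℝ) + 1) := by
      rw [ENNReal.ofReal_add (by positivity) zero_le_one]; simp
    rw [hs]
    simp only [Set.mem_preimage, Set.mem_Ico]
    rw [hn2, hn1, ENNReal.ofReal_le_iff_le_toReal hfin,
      ENNReal.lt_ofReal_iff_toReal_lt hfin]
    constructor
    · rintro ⟨h3, h4⟩
      exact ((Nat.floor_eq_iff ENNReal.toReal_nonneg).mpr ⟨h3, h4⟩).symm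
    · rintro rfl
      exact ⟨Nat.floor_le ENNReal.toReal_nonneg, Nat.lt_floor_add_one _⟩
  refine ⟨⟨fun n => ⟨fun a => if a ∈ s n then K a else 0, ?_⟩, fun n => ?_, ?_⟩⟩
  · apply Measure.measurable_of_measurable_coe
    intro t ht
    simp only [apply_ite (fun m : Measure β => m t)]
    exact Measurable.ite (hsm _) (K.measurable_coe ht) measurable_const
  · refine ⟨(n : ℝ≥0∞) + 1, by simp [ENNReal.add_lt_top], fun a => ?_⟩
    simp only [Kernel.coe_mk]
    split_ifs with hmem'
    · exact le_of_lt hmem'.2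
    · simp
  · ext a t ht
    rw [Kernel.sum_apply' _ _ ht]
    simp only [Kernel.coe_mk]
    rw [tsum_eq_single ⌊(K a Set.univ).toReal⌋₊]
    · rw [if_pos ((hmem a _).mpr rfl)]
    · intro n hn
      rw [if_neg (fun hc => hn ((hmem a n).mp hc))]
      simp

/-- **Drift identity and centering of the local drift.** Under the first-moment
condition, for every bounded measurable `g`,
`⟨g, Δ⟩_Q = (1/(2Z)) ∫ α dα ∫ dP ∫∫ Φ (g(ω,u) − g(θ_α ω,v)) dμ₀ dμ_α`;
in particular `⟨Δ⟩_Q = 0`. -/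
theorem drift_identity_and_centering
    {d : ℕ}
    (Λ : Set (EuclideanSpace ℝ (Fin (d + 1)))) (hΛ : IsCompact Λ)
    {Ω : Type*} [MeasurableSpace Ω] (P : Measure Ω) [IsProbabilityMeasure P]
    (θ : ℝ → Ω → Ω)
    (hθmeas : Measurable fun p : ℝ × Ω => θ p.1 p.2)
    (hθ0 : θ 0 = id)
    (hθadd : ∀ γ γ' : ℝ, θ (γ + γ') = θ γ ∘ θ γ')
    (hθP : ∀ γ : ℝ, MeasurePreserving (θ γ) P P)
    (μ : Ω → ℝ → Measure Λ)
    (hμfin : ∀ ω α, IsFiniteMeasure (μ ω α))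
    (hμmeas : ∀ s : Set Λ, MeasurableSet s → Measurable fun p : Ω × ℝ => μ p.1 p.2 s)
    (hμshift : ∀ γ ω α, μ (θ γ ω) α = μ ω (α + γ))
    (κ : Ω → ℝ → Λ → ℝ)
    (hκmeas : Measurable fun p : Ω × ℝ × Λ => κ p.1 p.2.1 p.2.2)
    (hκmem : ∀ ω α u, κ ω α u ∈ Set.Ioc (0 : ℝ) 1)
    (hκshift : ∀ γ ω α u, κ (θ γ ω) α u = κ ω (α + γ) u)
    (Φ : Ω → ℝ → Λ → ℝ → Λ → ℝ)
    (hΦmeas : Measurable fun p : Ω × ℝ × Λ × ℝ × Λ =>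
      Φ p.1 p.2.1 p.2.2.1 p.2.2.2.1 p.2.2.2.2)
    (hΦnonneg : ∀ ω α u β v, 0 ≤ Φ ω α u β v)
    (hΦsymm : ∀ ω α u β v, Φ ω α u β v = Φ ω β v α u)
    (hΦshift : ∀ γ ω α u β v, Φ (θ γ ω) α u β v = Φ ω (α + γ) u (β + γ) v)
    (hΦnorm : ∀ ω α, ∀ᵐ u ∂(μ ω α),
      (∫ β : ℝ, ∫ v, κ ω α u * Φ ω α u β v ∂(μ ω β)) = 1)
    (Z : ℝ) (hZpos : 0 < Z)
    (hZ : Z = ∫ ω, ∫ u, (κ ω 0 u)⁻¹ ∂(μ ω 0) ∂P)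
    (hmom : (∫⁻ ω, (∫⁻ u, ENNReal.ofReal ((κ ω 0 u)⁻¹) *
        (∫⁻ α : ℝ, ENNReal.ofReal |α| *
          (∫⁻ v, ENNReal.ofReal (κ ω 0 u * Φ ω 0 u α v) ∂(μ ω α))) ∂(μ ω 0)) ∂P) < ⊤) :
    (∀ g : Ω × Λ → ℝ, Measurable g → (∃ C, ∀ x, |g x| ≤ C) →
      Z⁻¹ * (∫ ω, ∫ u, (κ ω 0 u)⁻¹ * (g (ω, u) *
          (∫ α : ℝ, α * ∫ v, κ ω 0 u * Φ ω 0 u α v ∂(μ ω α))) ∂(μ ω 0) ∂P)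
        =
      (2 * Z)⁻¹ * (∫ α : ℝ, α * ∫ ω, ∫ u, ∫ v,
          Φ ω 0 u α v * (g (ω, u) - g (θ α ω, v)) ∂(μ ω α) ∂(μ ω 0) ∂P))
    ∧
    Z⁻¹ * (∫ ω, ∫ u, (κ ω 0 u)⁻¹ *
        (∫ α : ℝ, α * ∫ v, κ ω 0 u * Φ ω 0 u α v ∂(μ ω α)) ∂(μ ω 0) ∂P) = 0 := by
  classical
  -- basic facts about the flow
  have hθm : ∀ γ : ℝ, Measurable (θ γ) := fun γ =>
    hθmeas.comp (measurable_const.prodMk measurable_id)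
  have hθcomp : ∀ (a b : ℝ) (ω : Ω), θ a (θ b ω) = θ (a + b) ω := by
    intro a b ω; rw [hθadd]; rfl
  have hemb : ∀ γ : ℝ, MeasurableEmbedding (θ γ) := by
    intro γ
    exact MeasurableEquiv.measurableEmbedding
      { toFun := θ γ, invFun := θ (-γ),
        left_inv := fun ω => by rw [hθcomp, neg_add_cancel, hθ0]; rfl,
        right_inv := fun ω => by rw [hθcomp, add_neg_cancel, hθ0]; rfl,
        measurable_toFun := hθm γ, measurable_invFun := hθm (-γ) }
  -- kernels
  set Kq : Kernel ((Ω × Λ) × ℝ) Λ :=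
    ⟨fun q => μ q.1.1 q.2, Measure.measurable_of_measurable_coe _ fun t ht =>
      (hμmeas t ht).comp (measurable_fst.fst.prodMk measurable_snd)⟩ with hKq
  set K0 : Kernel Ω Λ :=
    ⟨fun ω => μ ω 0, Measure.measurable_of_measurable_coe _ fun t ht =>
      (hμmeas t ht).comp (measurable_id.prodMk measurable_const)⟩ with hK0
  haveI : IsSFiniteKernel Kq := isSFiniteKernel_of_finite _ fun q => hμfin _ _
  haveI : IsSFiniteKernel K0 := isSFiniteKernel_of_finite _ fun ω => hμfin _ _
  haveI : ∀ ω α, IsFiniteMeasure (μ ω α) := hμfin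
  set ν : Measure (Ω × Λ) := P ⊗ₘ K0 with hν
  -- joint measurability of Φ in the relevant variables
  have mΦ : Measurable fun r : ((Ω × Λ) × ℝ) × Λ => Φ r.1.1.1 0 r.1.1.2 r.1.2 r.2 :=
    hΦmeas.comp ((measurable_fst.fst.fst).prodMk (measurable_const.prodMk
      ((measurable_fst.fst.snd).prodMk ((measurable_fst.snd).prodMk measurable_snd))))
  have hΦsec : ∀ q : (Ω × Λ) × ℝ, Measurable fun v => Φ q.1.1 0 q.1.2 q.2 v :=
    fun q => mΦ.comp measurable_prodMk_left
  -- the ℝ≥0∞- and ℝ-valued Φ-masses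
  set lm : (Ω × Λ) × ℝ → ℝ≥0∞ :=
    fun q => ∫⁻ v, ENNReal.ofReal (Φ q.1.1 0 q.1.2 q.2 v) ∂μ q.1.1 q.2 with hlm_def
  set m : (Ω × Λ) × ℝ → ℝ :=
    fun q => ∫ v, Φ q.1.1 0 q.1.2 q.2 v ∂μ q.1.1 q.2 with hm_def
  have hlm : Measurable lm := by
    have := Measurable.lintegral_kernel_prod_right' (κ := Kq) (f := fun r =>
      ENNReal.ofReal (Φ r.1.1.1 0 r.1.1.2 r.1.2 r.2)) mΦ.ennreal_ofReal
    exact this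
  have hm : Measurable m := by
    have := (StronglyMeasurable.integral_kernel_prod_right' (κ := Kq)
      mΦ.stronglyMeasurable).measurable
    exact this
  have hm_lm : ∀ q, m q = (lm q).toReal := fun q =>
    integral_eq_lintegral_of_nonneg_ae
      (Filter.Eventually.of_forall fun v => hΦnonneg _ _ _ _ _)
      (hΦsec q).aestronglyMeasurable
  have hm_nonneg : ∀ q, 0 ≤ m q := fun q => by
    rw [hm_lm q]; exact ENNReal.toReal_nonneg
  have hofm : ∀ q, ENNReal.ofReal |m q| ≤ lm q := fun q => by
    rw [abs_of_nonneg (hm_nonneg q), hm_lm q]; exact ENNReal.ofReal_toReal_le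
  have hΦint : ∀ q : (Ω × Λ) × ℝ, lm q ≠ ⊤ →
      Integrable (fun v => Φ q.1.1 0 q.1.2 q.2 v) (μ q.1.1 q.2) := by
    intro q hq
    refine ⟨(hΦsec q).aestronglyMeasurable, ?_⟩
    rw [hasFiniteIntegral_iff_norm]
    have : ∀ v, ENNReal.ofReal ‖Φ q.1.1 0 q.1.2 q.2 v‖ =
        ENNReal.ofReal (Φ q.1.1 0 q.1.2 q.2 v) := fun v => by
      rw [Real.norm_eq_abs, abs_of_nonneg (hΦnonneg _ _ _ _ _)]
    simp only [this]
    exact lt_of_le_of_ne le_top hq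
  -- reduction of the moment hypothesis
  have hmomlm : ∀ ω u, ENNReal.ofReal ((κ ω 0 u)⁻¹) *
        (∫⁻ α : ℝ, ENNReal.ofReal |α| *
          (∫⁻ v, ENNReal.ofReal (κ ω 0 u * Φ ω 0 u α v) ∂(μ ω α)))
      = ∫⁻ α : ℝ, ENNReal.ofReal |α| * lm ((ω, u), α) := by
    intro ω u
    have hκpos := (hκmem ω 0 u).1
    have h1 : ∀ α : ℝ, (∫⁻ v, ENNReal.ofReal (κ ω 0 u * Φ ω 0 u α v) ∂(μ ω α))
        = ENNReal.ofReal (κ ω 0 u) * lm ((ω, u), α) := by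
      intro α
      rw [hlm_def]
      simp only
      rw [← lintegral_const_mul' _ _ ENNReal.ofReal_ne_top]
      exact lintegral_congr fun v => by rw [ENNReal.ofReal_mul hκpos.le]
    simp only [h1]
    have h2 : ∀ α : ℝ, ENNReal.ofReal |α| * (ENNReal.ofReal (κ ω 0 u) * lm ((ω, u), α))
        = ENNReal.ofReal (κ ω 0 u) * (ENNReal.ofReal |α| * lm ((ω, u), α)) := fun α => by ring
    simp only [h2]
    rw [lintegral_const_mul' _ _ ENNReal.ofReal_ne_top, ← mul_assoc,
      ← ENNReal.ofReal_mul (by positivity), inv_mul_cancel₀ hκpos.ne', ENNReal.ofReal_one,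
      one_mul]
  have hMP : (∫⁻ ω, ∫⁻ u, (∫⁻ α : ℝ, ENNReal.ofReal |α| * lm ((ω, u), α)) ∂(μ ω 0) ∂P) < ⊤ := by
    have heq : (∫⁻ ω, ∫⁻ u, (∫⁻ α : ℝ, ENNReal.ofReal |α| * lm ((ω, u), α)) ∂(μ ω 0) ∂P)
        = ∫⁻ ω, (∫⁻ u, ENNReal.ofReal ((κ ω 0 u)⁻¹) *
            (∫⁻ α : ℝ, ENNReal.ofReal |α| *
              (∫⁻ v, ENNReal.ofReal (κ ω 0 u * Φ ω 0 u α v) ∂(μ ω α))) ∂(μ ω 0)) ∂P :=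
      lintegral_congr fun ω => lintegral_congr fun u => (hmomlm ω u).symm
    rw [heq]
    exact hmom
  have hαlm : Measurable fun z : (Ω × Λ) × ℝ => ENNReal.ofReal |z.2| * lm z :=
    ((measurable_snd.abs).ennreal_ofReal).mul hlm
  have hMmeas : Measurable fun x : Ω × Λ => ∫⁻ α : ℝ, ENNReal.ofReal |α| * lm (x, α) :=
    hαlm.lintegral_prod_right'
  have hM : (∫⁻ x, (∫⁻ α : ℝ, ENNReal.ofReal |α| * lm (x, α)) ∂ν) < ⊤ := by
    rw [hν, Measure.lintegral_compProd hMmeas]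
    exact hMP
  -- the ℝ≥0∞-mass of a slice
  set lν : ℝ → ℝ≥0∞ := fun α => ∫⁻ x, lm (x, α) ∂ν with hlν_def
  have hlνm : Measurable lν :=
    (hlm.comp (measurable_snd.prodMk measurable_fst)).lintegral_prod_right'
  have hswapM : (∫⁻ α : ℝ, ENNReal.ofReal |α| * lν α) < ⊤ := by
    have h1 : ∀ α : ℝ, ENNReal.ofReal |α| * lν α
        = ∫⁻ x, ENNReal.ofReal |α| * lm (x, α) ∂ν :=
      fun α => (lintegral_const_mul' _ _ ENNReal.ofReal_ne_top).symm
    calc (∫⁻ α : ℝ, ENNReal.ofReal |α| * lν α)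
        = ∫⁻ α : ℝ, ∫⁻ x, ENNReal.ofReal |α| * lm (x, α) ∂ν := lintegral_congr h1
      _ = ∫⁻ x, (∫⁻ α : ℝ, ENNReal.ofReal |α| * lm (x, α)) ∂ν :=
          (lintegral_lintegral_swap hαlm.aemeasurable).symm
      _ < ⊤ := hM
  have haefin : ∀ᵐ α : ℝ ∂(volume : Measure ℝ), lν α < ⊤ := by
    have h := ae_lt_top ((measurable_id.abs.ennreal_ofReal).mul hlνm) hswapM.ne
    have h0 : ∀ᵐ α : ℝ ∂(volume : Measure ℝ), α ≠ 0 := by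
      rw [ae_iff]
      simp only [ne_eq, not_not]
      have : {a : ℝ | a = 0} = {(0 : ℝ)} := by ext a; simp
      rw [this]
      exact measure_singleton 0
    filter_upwards [h, h0] with α h1 h2
    by_contra hc
    rw [not_lt, top_le_iff] at hc
    rw [Pi.mul_apply, hc, ENNReal.mul_top (by
      simp only [ne_eq, ENNReal.ofReal_eq_zero, not_le]
      exact abs_pos.mpr h2)] at h1
    exact absurd h1 (lt_irrefl ⊤)
  have haefin' : ∀ᵐ α : ℝ ∂(volume : Measure ℝ), lν α < ⊤ ∧ lν (-α) < ⊤ := by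
    refine haefin.and ?_
    exact (Measure.measurePreserving_neg (volume : Measure ℝ)).quasiMeasurePreserving.ae haefin
  -- the main claim, for an arbitrary bounded measurable g
  have key : ∀ g : Ω × Λ → ℝ, Measurable g → (∃ C, ∀ x, |g x| ≤ C) →
      Z⁻¹ * (∫ ω, ∫ u, (κ ω 0 u)⁻¹ * (g (ω, u) *
          (∫ α : ℝ, α * ∫ v, κ ω 0 u * Φ ω 0 u α v ∂(μ ω α))) ∂(μ ω 0) ∂P)
        =
      (2 * Z)⁻¹ * (∫ α : ℝ, α * ∫ ω, ∫ u, ∫ v,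
          Φ ω 0 u α v * (g (ω, u) - g (θ α ω, v)) ∂(μ ω α) ∂(μ ω 0) ∂P) := by
    intro g hgm hgC'
    obtain ⟨C₀, hC₀⟩ := hgC'
    set C : ℝ := max C₀ 0 + 1 with hCdef
    have hgC : ∀ x, |g x| ≤ C := fun x =>
      (hC₀ x).trans (by rw [hCdef]; linarith [le_max_left C₀ (0:ℝ)])
    have hCpos : (0:ℝ) < C := by
      rw [hCdef]; linarith [le_max_right C₀ (0:ℝ)]
    -- auxiliary integrands
    set n : (Ω × Λ) × ℝ → ℝ :=
      fun q => ∫ v, Φ q.1.1 0 q.1.2 q.2 v * g (θ q.2 q.1.1, v) ∂μ q.1.1 q.2 with hn_def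
    set w : (Ω × Λ) × ℝ → ℝ :=
      fun q => ∫ v, Φ q.1.1 0 q.1.2 q.2 v * (g q.1 - g (θ q.2 q.1.1, v)) ∂μ q.1.1 q.2
      with hw_def
    set F : ℝ → ℝ := fun α => ∫ x, g x * m (x, α) ∂ν with hF_def
    set G : ℝ → ℝ := fun α => ∫ x, n (x, α) ∂ν with hG_def
    have hθg : Measurable fun r : ((Ω × Λ) × ℝ) × Λ => g (θ r.1.2 r.1.1.1, r.2) :=
      hgm.comp ((hθmeas.comp ((measurable_fst.snd).prodMk
        measurable_fst.fst.fst)).prodMk measurable_snd)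
    have hn : Measurable n :=
      (StronglyMeasurable.integral_kernel_prod_right' (κ := Kq)
        (mΦ.mul hθg).stronglyMeasurable).measurable
    have hw : Measurable w :=
      (StronglyMeasurable.integral_kernel_prod_right' (κ := Kq)
        (mΦ.mul ((hgm.comp measurable_fst.fst).sub hθg)).stronglyMeasurable).measurable
    -- bounds
    have hofm2 : ∀ q, ENNReal.ofReal (m q) ≤ lm q := fun q => by
      rw [hm_lm q]; exact ENNReal.ofReal_toReal_le
    have hbound_gm : ∀ (x : Ω × Λ) (α : ℝ),
        ENNReal.ofReal |g x * m (x, α)| ≤ ENNReal.ofReal C * lm (x, α) := by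
      intro x α
      rw [abs_mul, ENNReal.ofReal_mul (abs_nonneg _)]
      exact mul_le_mul' (ENNReal.ofReal_le_ofReal (hgC x)) (hofm _)
    have hbound_int : ∀ (c : ℝ) (q : (Ω × Λ) × ℝ) (h : Λ → ℝ), 0 ≤ c → Measurable h →
        (∀ v, |h v| ≤ c) →
        ENNReal.ofReal |∫ v, Φ q.1.1 0 q.1.2 q.2 v * h v ∂μ q.1.1 q.2| ≤
          ENNReal.ofReal c * lm q := by
      intro c q h hc hhm hhb
      by_cases hq : lm q = ⊤
      · by_cases hcz : c = 0
        · have hz : ∀ v, h v = 0 := fun v => abs_nonpos_iff.mp (hcz ▸ hhb v)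
          have : (∫ v, Φ q.1.1 0 q.1.2 q.2 v * h v ∂μ q.1.1 q.2) = 0 := by
            refine integral_eq_zero_of_ae (Filter.Eventually.of_forall fun v => ?_)
            show Φ q.1.1 0 q.1.2 q.2 v * h v = 0
            rw [hz v, mul_zero]
          rw [this, abs_zero, ENNReal.ofReal_zero]
          exact zero_le
        · rw [hq, ENNReal.mul_top (by
            simp only [ne_eq, ENNReal.ofReal_eq_zero, not_le]
            exact lt_of_le_of_ne hc (Ne.symm hcz))]
          exact le_top
      · have hΦi := hΦint q hq
        have hreal : |∫ v, Φ q.1.1 0 q.1.2 q.2 v * h v ∂μ q.1.1 q.2| ≤ c * m q := by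
          calc |∫ v, Φ q.1.1 0 q.1.2 q.2 v * h v ∂μ q.1.1 q.2|
              = ‖∫ v, Φ q.1.1 0 q.1.2 q.2 v * h v ∂μ q.1.1 q.2‖ := (Real.norm_eq_abs _).symm
            _ ≤ ∫ v, ‖Φ q.1.1 0 q.1.2 q.2 v * h v‖ ∂μ q.1.1 q.2 :=
                norm_integral_le_integral_norm _
            _ ≤ ∫ v, c * Φ q.1.1 0 q.1.2 q.2 v ∂μ q.1.1 q.2 := by
                refine integral_mono_of_nonneg
                  (Filter.Eventually.of_forall fun v => norm_nonneg _)
                  (hΦi.const_mul c) (Filter.Eventually.of_forall fun v => ?_)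
                show ‖Φ q.1.1 0 q.1.2 q.2 v * h v‖ ≤ c * Φ q.1.1 0 q.1.2 q.2 v
                rw [norm_mul, Real.norm_eq_abs, Real.norm_eq_abs,
                  abs_of_nonneg (hΦnonneg _ _ _ _ _)]
                calc Φ q.1.1 0 q.1.2 q.2 v * |h v| ≤ Φ q.1.1 0 q.1.2 q.2 v * c :=
                    mul_le_mul_of_nonneg_left (hhb v) (hΦnonneg _ _ _ _ _)
                  _ = c * Φ q.1.1 0 q.1.2 q.2 v := mul_comm _ _
            _ = c * m q := integral_const_mul _ _
        calc ENNReal.ofReal |∫ v, Φ q.1.1 0 q.1.2 q.2 v * h v ∂μ q.1.1 q.2|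
            ≤ ENNReal.ofReal (c * m q) := ENNReal.ofReal_le_ofReal hreal
          _ = ENNReal.ofReal c * ENNReal.ofReal (m q) := ENNReal.ofReal_mul hc
          _ ≤ ENNReal.ofReal c * lm q := mul_le_mul_right (hofm2 q) _
    have hbound_n : ∀ q, ENNReal.ofReal |n q| ≤ ENNReal.ofReal C * lm q := fun q =>
      hbound_int C q _ hCpos.le (hgm.comp ((measurable_const).prodMk measurable_id))
        (fun v => hgC _)
    have hbound_w : ∀ q, ENNReal.ofReal |w q| ≤ ENNReal.ofReal (2 * C) * lm q := fun q =>
      hbound_int (2 * C) q _ (by linarith)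
        ((measurable_const).sub (hgm.comp ((measurable_const).prodMk measurable_id)))
        (fun v => by
          have h1 := hgC q.1
          have h2 := hgC (θ q.2 q.1.1, v)
          have := abs_sub (g q.1) (g (θ q.2 q.1.1, v))
          calc |g q.1 - g (θ q.2 q.1.1, v)| ≤ |g q.1| + |g (θ q.2 q.1.1, v)| :=
                abs_sub _ _
            _ ≤ 2 * C := by linarith)
    -- integrability helpers
    have hIntProd : ∀ (c : ℝ) (f : (Ω × Λ) × ℝ → ℝ), Measurable f →
        (∀ z, ENNReal.ofReal |f z| ≤ ENNReal.ofReal c * (ENNReal.ofReal |z.2| * lm z)) →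
        Integrable f (ν.prod (volume : Measure ℝ)) := by
      intro c f hf hb
      refine ⟨hf.aestronglyMeasurable, ?_⟩
      rw [hasFiniteIntegral_iff_norm]
      calc (∫⁻ z, ENNReal.ofReal ‖f z‖ ∂(ν.prod (volume : Measure ℝ)))
          ≤ ∫⁻ z, ENNReal.ofReal c * (ENNReal.ofReal |z.2| * lm z)
              ∂(ν.prod (volume : Measure ℝ)) :=
            lintegral_mono fun z => by rw [Real.norm_eq_abs]; exact hb z
        _ = ENNReal.ofReal c * ∫⁻ z, ENNReal.ofReal |z.2| * lm z
              ∂(ν.prod (volume : Measure ℝ)) :=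
            lintegral_const_mul' _ _ ENNReal.ofReal_ne_top
        _ = ENNReal.ofReal c * ∫⁻ x, (∫⁻ α : ℝ, ENNReal.ofReal |α| * lm (x, α)) ∂ν := by
            rw [lintegral_prod _ hαlm.aemeasurable]
        _ < ⊤ := ENNReal.mul_lt_top ENNReal.ofReal_lt_top hM
    have hIntν : ∀ (c : ℝ) (α : ℝ) (f : Ω × Λ → ℝ), Measurable f → lν α ≠ ⊤ →
        (∀ x, ENNReal.ofReal |f x| ≤ ENNReal.ofReal c * lm (x, α)) →
        Integrable f ν := by
      intro c α f hf hα hb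
      refine ⟨hf.aestronglyMeasurable, ?_⟩
      rw [hasFiniteIntegral_iff_norm]
      calc (∫⁻ x, ENNReal.ofReal ‖f x‖ ∂ν)
          ≤ ∫⁻ x, ENNReal.ofReal c * lm (x, α) ∂ν :=
            lintegral_mono fun x => by rw [Real.norm_eq_abs]; exact hb x
        _ = ENNReal.ofReal c * lν α := lintegral_const_mul' _ _ ENNReal.ofReal_ne_top
        _ < ⊤ := ENNReal.mul_lt_top ENNReal.ofReal_lt_top (lt_top_iff_ne_top.mpr hα)
    -- product integrabilities
    have Int1 : Integrable (Function.uncurry fun (x : Ω × Λ) (α : ℝ) =>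
        g x * (α * m (x, α))) (ν.prod (volume : Measure ℝ)) := by
      refine hIntProd C _ ((hgm.comp measurable_fst).mul (measurable_snd.mul hm)) fun z => ?_
      calc ENNReal.ofReal |g z.1 * (z.2 * m z)|
          = ENNReal.ofReal |g z.1| * (ENNReal.ofReal |z.2| * ENNReal.ofReal |m z|) := by
            rw [abs_mul, abs_mul, ENNReal.ofReal_mul (abs_nonneg _),
              ENNReal.ofReal_mul (abs_nonneg _)]
        _ ≤ ENNReal.ofReal C * (ENNReal.ofReal |z.2| * lm z) :=
            mul_le_mul' (ENNReal.ofReal_le_ofReal (hgC _)) (mul_le_mul_right (hofm _) _)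
    have Int2 : Integrable (Function.uncurry fun (x : Ω × Λ) (α : ℝ) =>
        α * n (x, α)) (ν.prod (volume : Measure ℝ)) := by
      refine hIntProd C _ (measurable_snd.mul hn) fun z => ?_
      calc ENNReal.ofReal |z.2 * n z|
          = ENNReal.ofReal |z.2| * ENNReal.ofReal |n z| := by
            rw [abs_mul, ENNReal.ofReal_mul (abs_nonneg _)]
        _ ≤ ENNReal.ofReal |z.2| * (ENNReal.ofReal C * lm z) :=
            mul_le_mul_right (hbound_n z) _
        _ = ENNReal.ofReal C * (ENNReal.ofReal |z.2| * lm z) := by ring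
    -- the local drift
    set D : Ω × Λ → ℝ := fun x => ∫ α : ℝ, α * m (x, α) with hD_def
    have hLHSpt : ∀ ω u, (κ ω 0 u)⁻¹ * (g (ω, u) *
        (∫ α : ℝ, α * ∫ v, κ ω 0 u * Φ ω 0 u α v ∂(μ ω α))) = g (ω, u) * D (ω, u) := by
      intro ω u
      have hκpos := (hκmem ω 0 u).1
      have h1 : (∫ α : ℝ, α * ∫ v, κ ω 0 u * Φ ω 0 u α v ∂(μ ω α))
          = κ ω 0 u * D (ω, u) := by
        calc (∫ α : ℝ, α * ∫ v, κ ω 0 u * Φ ω 0 u α v ∂(μ ω α))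
            = ∫ α : ℝ, κ ω 0 u * (α * m ((ω, u), α)) := by
              refine integral_congr_ae (Filter.Eventually.of_forall fun α => ?_)
              show α * ∫ v, κ ω 0 u * Φ ω 0 u α v ∂(μ ω α) = κ ω 0 u * (α * m ((ω, u), α))
              rw [integral_const_mul,
                show m ((ω, u), α) = ∫ v, Φ ω 0 u α v ∂(μ ω α) from rfl]
              ring
          _ = κ ω 0 u * D (ω, u) := integral_const_mul _ _
      rw [h1]
      calc (κ ω 0 u)⁻¹ * (g (ω, u) * (κ ω 0 u * D (ω, u)))
          = ((κ ω 0 u)⁻¹ * κ ω 0 u) * (g (ω, u) * D (ω, u)) := by ring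
        _ = g (ω, u) * D (ω, u) := by rw [inv_mul_cancel₀ hκpos.ne', one_mul]
    have IntD : Integrable (fun x => g x * D x) ν := by
      have h := Int1.integral_prod_left
      refine h.congr (Filter.Eventually.of_forall fun x => ?_)
      show (∫ α : ℝ, g x * (α * m (x, α))) = g x * D x
      exact integral_const_mul _ _
    have hLHS : (∫ ω, ∫ u, (κ ω 0 u)⁻¹ * (g (ω, u) *
          (∫ α : ℝ, α * ∫ v, κ ω 0 u * Φ ω 0 u α v ∂(μ ω α))) ∂(μ ω 0) ∂P)
        = ∫ α : ℝ, α * F α := by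
      calc (∫ ω, ∫ u, (κ ω 0 u)⁻¹ * (g (ω, u) *
            (∫ α : ℝ, α * ∫ v, κ ω 0 u * Φ ω 0 u α v ∂(μ ω α))) ∂(μ ω 0) ∂P)
          = ∫ ω, ∫ u, g (ω, u) * D (ω, u) ∂(μ ω 0) ∂P := by
            refine integral_congr_ae (Filter.Eventually.of_forall fun ω => ?_)
            exact integral_congr_ae (Filter.Eventually.of_forall fun u => hLHSpt ω u)
        _ = ∫ x, g x * D x ∂ν := (Measure.integral_compProd IntD).symm
        _ = ∫ x, ∫ α : ℝ, g x * (α * m (x, α)) ∂(volume : Measure ℝ) ∂ν := by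
            refine integral_congr_ae (Filter.Eventually.of_forall fun x => ?_)
            exact (integral_const_mul _ _).symm
        _ = ∫ α : ℝ, ∫ x, g x * (α * m (x, α)) ∂ν ∂(volume : Measure ℝ) :=
            integral_integral_swap Int1
        _ = ∫ α : ℝ, α * F α := by
            refine integral_congr_ae (Filter.Eventually.of_forall fun α => ?_)
            calc (∫ x, g x * (α * m (x, α)) ∂ν)
                = ∫ x, α * (g x * m (x, α)) ∂ν := by
                  refine integral_congr_ae (Filter.Eventually.of_forall fun x => ?_)
                  show g x * (α * m (x, α)) = α * (g x * m (x, α))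
                  ring
              _ = α * F α := integral_const_mul _ _
    -- slicewise identities
    have hslice : ∀ α : ℝ, lν α < ⊤ → lν (-α) < ⊤ →
        ((∫ ω, ∫ u, ∫ v, Φ ω 0 u α v * (g (ω, u) - g (θ α ω, v)) ∂(μ ω α) ∂(μ ω 0) ∂P)
            = F α - G α) ∧ G α = F (-α) := by
      intro α hα1 hα2
      have hmsec : Measurable fun x : Ω × Λ => m (x, α) :=
        hm.comp (measurable_id.prodMk measurable_const)
      have Int_gm : Integrable (fun x => g x * m (x, α)) ν :=
        hIntν C α _ (hgm.mul hmsec) hα1.ne fun x => hbound_gm x α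
      have Int_gm' : Integrable (fun x => g x * m (x, -α)) ν :=
        hIntν C (-α) _ (hgm.mul (hm.comp (measurable_id.prodMk measurable_const))) hα2.ne
          fun x => hbound_gm x (-α)
      have Int_n : Integrable (fun x => n (x, α)) ν :=
        hIntν C α _ (hn.comp (measurable_id.prodMk measurable_const)) hα1.ne
          fun x => hbound_n (x, α)
      have Int_w : Integrable (fun x => w (x, α)) ν :=
        hIntν (2 * C) α _ (hw.comp (measurable_id.prodMk measurable_const)) hα1.ne
          fun x => hbound_w (x, α)
      constructor
      · have haex : ∀ᵐ x ∂ν, lm (x, α) < ⊤ :=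
          ae_lt_top (hlm.comp (measurable_id.prodMk measurable_const)) hα1.ne
        calc (∫ ω, ∫ u, ∫ v, Φ ω 0 u α v * (g (ω, u) - g (θ α ω, v)) ∂(μ ω α) ∂(μ ω 0) ∂P)
            = ∫ x, w (x, α) ∂ν := (Measure.integral_compProd Int_w).symm
          _ = ∫ x, (g x * m (x, α) - n (x, α)) ∂ν := by
              refine integral_congr_ae ?_
              filter_upwards [haex] with x hx
              have hΦi := hΦint (x, α) hx.ne
              have hint1 : Integrable (fun v => Φ x.1 0 x.2 α v * g x) (μ x.1 α) :=
                hΦi.mul_const _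
              have hint2 : Integrable (fun v => Φ x.1 0 x.2 α v * g (θ α x.1, v))
                  (μ x.1 α) := by
                refine (hΦi.const_mul C).mono
                  (((hΦsec (x, α)).mul
                    (hgm.comp (measurable_const.prodMk measurable_id))).aestronglyMeasurable)
                  (Filter.Eventually.of_forall fun v => ?_)
                show ‖Φ x.1 0 x.2 α v * g (θ α x.1, v)‖ ≤ ‖C * Φ x.1 0 x.2 α v‖
                rw [norm_mul, norm_mul]
                simp only [Real.norm_eq_abs]
                rw [abs_of_nonneg (hΦnonneg _ _ _ _ _), abs_of_nonneg hCpos.le]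
                calc Φ x.1 0 x.2 α v * |g (θ α x.1, v)| ≤ Φ x.1 0 x.2 α v * C :=
                    mul_le_mul_of_nonneg_left (hgC _) (hΦnonneg _ _ _ _ _)
                  _ = C * Φ x.1 0 x.2 α v := mul_comm _ _
              calc w (x, α)
                  = ∫ v, (Φ x.1 0 x.2 α v * g x - Φ x.1 0 x.2 α v * g (θ α x.1, v))
                      ∂(μ x.1 α) := by
                    refine integral_congr_ae (Filter.Eventually.of_forall fun v => ?_)
                    show Φ x.1 0 x.2 α v * (g x - g (θ α x.1, v)) = _
                    ring
                _ = (∫ v, Φ x.1 0 x.2 α v * g x ∂(μ x.1 α))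
                    - ∫ v, Φ x.1 0 x.2 α v * g (θ α x.1, v) ∂(μ x.1 α) :=
                    integral_sub hint1 hint2
                _ = g x * m (x, α) - n (x, α) := by
                    rw [integral_mul_const,
                      show (∫ v, Φ x.1 0 x.2 α v ∂(μ x.1 α)) = m (x, α) from rfl,
                      show (∫ v, Φ x.1 0 x.2 α v * g (θ α x.1, v) ∂(μ x.1 α)) = n (x, α)
                        from rfl,
                      mul_comm]
          _ = F α - G α := integral_sub Int_gm Int_n
      · have e0 : G α = ∫ ω, (∫ u, n ((ω, u), α) ∂(μ ω 0)) ∂P :=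
          Measure.integral_compProd Int_n
        have e2 : ∀ ω, (∫ u, n ((θ (-α) ω, u), α) ∂(μ (θ (-α) ω) 0))
            = ∫ u, ∫ v, Φ ω 0 v (-α) u * g (ω, v) ∂(μ ω 0) ∂(μ ω (-α)) := by
          intro ω
          have eμ0 : μ (θ (-α) ω) 0 = μ ω (-α) := by rw [hμshift, zero_add]
          have eμα : μ (θ (-α) ω) α = μ ω 0 := by rw [hμshift, add_neg_cancel]
          have eθ : ∀ v : Λ, g (θ α (θ (-α) ω), v) = g (ω, v) := fun v => by
            rw [hθcomp, add_neg_cancel, hθ0]; rfl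
          have eΦ : ∀ u v : Λ, Φ (θ (-α) ω) 0 u α v = Φ ω 0 v (-α) u := fun u v => by
            rw [hΦshift, zero_add, add_neg_cancel, hΦsymm]
          show (∫ u, n ((θ (-α) ω, u), α) ∂(μ (θ (-α) ω) 0)) = _
          rw [eμ0]
          refine integral_congr_ae (Filter.Eventually.of_forall fun u => ?_)
          show (∫ v, Φ (θ (-α) ω) 0 u α v * g (θ α (θ (-α) ω), v) ∂(μ (θ (-α) ω) α)) = _
          rw [eμα]
          refine integral_congr_ae (Filter.Eventually.of_forall fun v => ?_)
          show Φ (θ (-α) ω) 0 u α v * g (θ α (θ (-α) ω), v) = Φ ω 0 v (-α) u * g (ω, v)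
          rw [eΦ, eθ]
        have hJm : Measurable fun ω => ∫⁻ v, lm ((ω, v), -α) ∂(μ ω 0) := by
          have := Measurable.lintegral_kernel_prod_right' (κ := K0)
            (f := fun r : Ω × Λ => lm ((r.1, r.2), -α))
            (hlm.comp ((measurable_fst.prodMk measurable_snd).prodMk measurable_const))
          exact this
        have hJ : ∀ᵐ ω ∂P, (∫⁻ v, lm ((ω, v), -α) ∂(μ ω 0)) < ⊤ := by
          refine ae_lt_top hJm ?_
          have hle : lν (-α) = ∫⁻ ω, ∫⁻ v, lm ((ω, v), -α) ∂(μ ω 0) ∂P := by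
            have := Measure.lintegral_compProd (μ := P) (κ := K0)
              (f := fun x : Ω × Λ => lm (x, -α))
              (hlm.comp (measurable_id.prodMk measurable_const))
            exact this
          rw [← hle]
          exact hα2.ne
        have e3 : ∀ᵐ ω ∂P, (∫ u, ∫ v, Φ ω 0 v (-α) u * g (ω, v) ∂(μ ω 0) ∂(μ ω (-α)))
            = ∫ v, g (ω, v) * m ((ω, v), -α) ∂(μ ω 0) := by
          filter_upwards [hJ] with ω hJω
          have hmeas1 : Measurable fun z : Λ × Λ => Φ ω 0 z.2 (-α) z.1 := by
            have : Measurable fun p : Ω × ℝ × Λ × ℝ × Λ =>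
                Φ p.1 p.2.1 p.2.2.1 p.2.2.2.1 p.2.2.2.2 := hΦmeas
            exact this.comp ((measurable_const.prodMk (measurable_const.prodMk
              (measurable_snd.prodMk (measurable_const.prodMk measurable_fst)))))
          have hmeas2 : Measurable (Function.uncurry fun (u : Λ) (v : Λ) =>
              Φ ω 0 v (-α) u * g (ω, v)) :=
            hmeas1.mul (hgm.comp (measurable_const.prodMk measurable_snd))
          have hfin : Integrable (Function.uncurry fun (u : Λ) (v : Λ) =>
              Φ ω 0 v (-α) u * g (ω, v)) ((μ ω (-α)).prod (μ ω 0)) := by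
            refine ⟨hmeas2.aestronglyMeasurable, ?_⟩
            rw [hasFiniteIntegral_iff_norm]
            calc (∫⁻ z, ENNReal.ofReal ‖Φ ω 0 z.2 (-α) z.1 * g (ω, z.2)‖
                  ∂((μ ω (-α)).prod (μ ω 0)))
                ≤ ∫⁻ z, ENNReal.ofReal C * ENNReal.ofReal (Φ ω 0 z.2 (-α) z.1)
                    ∂((μ ω (-α)).prod (μ ω 0)) := by
                  refine lintegral_mono fun z => ?_
                  rw [norm_mul, Real.norm_eq_abs, Real.norm_eq_abs,
                    abs_of_nonneg (hΦnonneg _ _ _ _ _)]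
                  calc ENNReal.ofReal (Φ ω 0 z.2 (-α) z.1 * |g (ω, z.2)|)
                      ≤ ENNReal.ofReal (Φ ω 0 z.2 (-α) z.1 * C) :=
                        ENNReal.ofReal_le_ofReal
                          (mul_le_mul_of_nonneg_left (hgC _) (hΦnonneg _ _ _ _ _))
                    _ = ENNReal.ofReal C * ENNReal.ofReal (Φ ω 0 z.2 (-α) z.1) := by
                        rw [mul_comm, ENNReal.ofReal_mul hCpos.le]
              _ = ENNReal.ofReal C * ∫⁻ z, ENNReal.ofReal (Φ ω 0 z.2 (-α) z.1)
                    ∂((μ ω (-α)).prod (μ ω 0)) :=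
                  lintegral_const_mul' _ _ ENNReal.ofReal_ne_top
              _ = ENNReal.ofReal C * ∫⁻ v, ∫⁻ u, ENNReal.ofReal (Φ ω 0 v (-α) u)
                    ∂(μ ω (-α)) ∂(μ ω 0) := by
                  rw [lintegral_prod_symm _ hmeas1.ennreal_ofReal.aemeasurable]
              _ = ENNReal.ofReal C * ∫⁻ v, lm ((ω, v), -α) ∂(μ ω 0) := rfl
              _ < ⊤ := ENNReal.mul_lt_top ENNReal.ofReal_lt_top hJω
          calc (∫ u, ∫ v, Φ ω 0 v (-α) u * g (ω, v) ∂(μ ω 0) ∂(μ ω (-α)))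
              = ∫ v, ∫ u, Φ ω 0 v (-α) u * g (ω, v) ∂(μ ω (-α)) ∂(μ ω 0) :=
                integral_integral_swap hfin
            _ = ∫ v, g (ω, v) * m ((ω, v), -α) ∂(μ ω 0) := by
                refine integral_congr_ae (Filter.Eventually.of_forall fun v => ?_)
                show (∫ u, Φ ω 0 v (-α) u * g (ω, v) ∂(μ ω (-α))) = _
                rw [integral_mul_const,
                  show (∫ u, Φ ω 0 v (-α) u ∂(μ ω (-α))) = m ((ω, v), -α) from rfl,
                  mul_comm]
        calc G α = ∫ ω, (∫ u, n ((ω, u), α) ∂(μ ω 0)) ∂P := e0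
          _ = ∫ ω, (∫ u, n ((θ (-α) ω, u), α) ∂(μ (θ (-α) ω) 0)) ∂P :=
              ((hθP (-α)).integral_comp (hemb (-α))
                (fun ω => ∫ u, n ((ω, u), α) ∂(μ ω 0))).symm
          _ = ∫ ω, ∫ u, ∫ v, Φ ω 0 v (-α) u * g (ω, v) ∂(μ ω 0) ∂(μ ω (-α)) ∂P :=
              integral_congr_ae (Filter.Eventually.of_forall e2)
          _ = ∫ ω, ∫ v, g (ω, v) * m ((ω, v), -α) ∂(μ ω 0) ∂P := integral_congr_ae e3
          _ = F (-α) := (Measure.integral_compProd Int_gm').symm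
    -- integrability in α
    have IntF : Integrable (fun α : ℝ => α * F α) (volume : Measure ℝ) := by
      have h := Int1.swap.integral_prod_left
      refine h.congr (Filter.Eventually.of_forall fun α => ?_)
      show (∫ x, g x * (α * m (x, α)) ∂ν) = α * F α
      calc (∫ x, g x * (α * m (x, α)) ∂ν)
          = ∫ x, α * (g x * m (x, α)) ∂ν := by
            refine integral_congr_ae (Filter.Eventually.of_forall fun x => ?_)
            show g x * (α * m (x, α)) = α * (g x * m (x, α))
            ring
        _ = α * F α := integral_const_mul _ _
    have IntG : Integrable (fun α : ℝ => α * G α) (volume : Measure ℝ) := by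
      have h := Int2.swap.integral_prod_left
      refine h.congr (Filter.Eventually.of_forall fun α => ?_)
      show (∫ x, α * n (x, α) ∂ν) = α * G α
      exact integral_const_mul _ _
    -- assemble
    rw [hLHS]
    have hae1 : ∀ᵐ α : ℝ ∂(volume : Measure ℝ),
        α * (∫ ω, ∫ u, ∫ v, Φ ω 0 u α v * (g (ω, u) - g (θ α ω, v)) ∂(μ ω α) ∂(μ ω 0) ∂P)
          = α * F α - α * G α := by
      filter_upwards [haefin'] with α hα
      rw [(hslice α hα.1 hα.2).1]
      ring
    have hae2 : ∀ᵐ α : ℝ ∂(volume : Measure ℝ), α * G α = α * F (-α) := by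
      filter_upwards [haefin'] with α hα
      rw [(hslice α hα.1 hα.2).2]
    have hFneg : (∫ α : ℝ, α * F (-α)) = - ∫ α : ℝ, α * F α := by
      have h4 : (∫ α : ℝ, α * F (-α)) = ∫ α : ℝ, -((-α) * F (-α)) := by
        refine integral_congr_ae (Filter.Eventually.of_forall fun α => ?_)
        show α * F (-α) = -((-α) * F (-α))
        ring
      rw [h4, integral_neg]
      congr 1
      exact (Measure.measurePreserving_neg (volume : Measure ℝ)).integral_comp
        (MeasurableEquiv.neg ℝ).measurableEmbedding (fun β : ℝ => β * F β)
    have hRHS : (∫ α : ℝ, α * ∫ ω, ∫ u, ∫ v,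
        Φ ω 0 u α v * (g (ω, u) - g (θ α ω, v)) ∂(μ ω α) ∂(μ ω 0) ∂P)
          = 2 * ∫ α : ℝ, α * F α := by
      rw [integral_congr_ae hae1, integral_sub IntF IntG, integral_congr_ae hae2, hFneg]
      ring
    rw [hRHS]
    rw [mul_inv]
    field_simp
  refine ⟨key, ?_⟩
  -- centering: apply `key` to `g = 1`
  have h1 := key (fun _ => (1 : ℝ)) measurable_const ⟨1, fun x => by norm_num⟩
  have h2 : (∫ α : ℝ, α * ∫ ω, ∫ u, ∫ v,
      Φ ω 0 u α v * ((1 : ℝ) - 1) ∂(μ ω α) ∂(μ ω 0) ∂P) = 0 := by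
    simp
  rw [h2, mul_zero] at h1
  calc Z⁻¹ * (∫ ω, ∫ u, (κ ω 0 u)⁻¹ *
        (∫ α : ℝ, α * ∫ v, κ ω 0 u * Φ ω 0 u α v ∂(μ ω α)) ∂(μ ω 0) ∂P)
      = Z⁻¹ * (∫ ω, ∫ u, (κ ω 0 u)⁻¹ * ((fun _ => (1:ℝ)) (ω, u) *
        (∫ α : ℝ, α * ∫ v, κ ω 0 u * Φ ω 0 u α v ∂(μ ω α))) ∂(μ ω 0) ∂P) := by
        simp
    _ = 0 := h1
end

section
/- (Core of Proposition 2.3: finite projected second moment in a straight cylinder, d ≥ 3.) Let d ≥ 3 and M > 0, and let C = {y ∈ ℝ^d : ‖y − (y·e₁)e₁‖ < M} be the open infinite circular cylinder about the first coordinate axis. For x ∈ ∂C let n(x) = −(x − (x·e₁)e₁)/M be the inward unit normal, and for h ∈ S^{d−1} with h·n(x) > 0 let ℓ(x,h) = inf{t > 0 : x + t h ∉ C} be the exit length of the ray from x in direction h (which is positive and finite when h·n(x) > 0). Then for every x ∈ ∂C the second moment of the horizontal displacement of the cosine-law chord is finite: ∫_{{h ∈ S^{d−1} : h·n(x) > 0}}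 (ℓ(x,h) (h·e₁))² (h·n(x)) dσ(h) < ∞, where σ denotes the (d−1)-dimensional Hausdorff (surface) measure on S^{d−1}. -/
open MeasureTheory Metric Set
open scoped RealInnerProductSpace NNReal ENNReal

noncomputable section

abbrev Eu (n : ℕ) := EuclideanSpace ℝ (Fin n)

def tailE {n : ℕ} (y : Eu (n+1)) : Eu n := (WithLp.equiv 2 _).symm (fun i => y i.succ)

def graphE (n : ℕ) (v : Eu n) : Eu (n+1) :=
  (WithLp.equiv 2 _).symm (Fin.cons (Real.sqrt (1 - ‖v‖^2)) (WithLp.equiv 2 _ v))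

@[simp] lemma tailE_apply {n : ℕ} (y : Eu (n+1)) (i : Fin n) : tailE y i = y i.succ := rfl
@[simp] lemma graphE_zero {n : ℕ} (v : Eu n) : graphE n v 0 = Real.sqrt (1 - ‖v‖^2) := by
  simp [graphE]
@[simp] lemma graphE_succ {n : ℕ} (v : Eu n) (i : Fin n) : graphE n v i.succ = v i := by
  simp [graphE]

lemma norm_sq_eq {n : ℕ} (y : Eu n) : ‖y‖^2 = ∑ i, (y i)^2 := by
  rw [EuclideanSpace.norm_eq, Real.sq_sqrt (by positivity)]
  simp [sq_abs]

lemma norm_split {n : ℕ} (y : Eu (n+1)) : ‖y‖^2 = (y 0)^2 + ‖tailE y‖^2 := by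
  rw [norm_sq_eq, norm_sq_eq, Fin.sum_univ_succ]; simp

lemma dist_sq_eq {n : ℕ} (y z : Eu n) : (dist y z)^2 = ∑ i, (y i - z i)^2 := by
  rw [EuclideanSpace.dist_eq, Real.sq_sqrt (by positivity)]
  simp [Real.dist_eq, sq_abs]

lemma sqrt_sub_sqrt_sq {ρ a b : ℝ} (hρ1 : ρ < 1) (ha0 : 0 ≤ a) (hb0 : 0 ≤ b)
    (ha : a ≤ ρ) (hb : b ≤ ρ) :
    (Real.sqrt (1-a^2) - Real.sqrt (1-b^2))^2 * (1 - ρ^2) ≤ (a-b)^2 * ρ^2 := by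
  have hρ0 : 0 ≤ ρ := le_trans ha0 ha
  set sa := Real.sqrt (1-a^2) with hsa
  set sb := Real.sqrt (1-b^2) with hsb
  have h1 : (0:ℝ) ≤ 1 - ρ^2 := by nlinarith
  have hsa2 : sa^2 = 1-a^2 := Real.sq_sqrt (by nlinarith)
  have hsb2 : sb^2 = 1-b^2 := Real.sq_sqrt (by nlinarith)
  have hsa0 : 0 ≤ sa := Real.sqrt_nonneg _
  have hsb0 : 0 ≤ sb := Real.sqrt_nonneg _
  have hca : Real.sqrt (1-ρ^2) ≤ sa := Real.sqrt_le_sqrt (by nlinarith)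
  have hcb : Real.sqrt (1-ρ^2) ≤ sb := Real.sqrt_le_sqrt (by nlinarith)
  have hcc : (1-ρ^2) ≤ sa*sb := by
    have h := mul_le_mul hca hcb (Real.sqrt_nonneg _) hsa0
    nlinarith [Real.sq_sqrt h1]
  have heq : (sa-sb)^2*(sa+sb)^2 = (a-b)^2*(a+b)^2 := by
    have h2 : sa^2 - sb^2 = b^2-a^2 := by rw [hsa2, hsb2]; ring
    calc (sa-sb)^2*(sa+sb)^2 = (sa^2-sb^2)^2 := by ring
    _ = (b^2-a^2)^2 := by rw [h2]
    _ = (a-b)^2*(a+b)^2 := by ring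
  have hgap : 4*(1-ρ^2) ≤ (sa+sb)^2 := by nlinarith
  have hup : (a+b)^2 ≤ 4*ρ^2 := by nlinarith
  nlinarith [mul_nonneg (sq_nonneg (sa-sb)) h1, sq_nonneg (sa-sb), sq_nonneg (a-b),
    mul_le_mul_of_nonneg_left hgap (sq_nonneg (sa-sb)),
    mul_le_mul_of_nonneg_left hup (sq_nonneg (a-b))]

lemma graphE_lip (n : ℕ) {ρ : ℝ} (hρ0 : 0 ≤ ρ) (hρ1 : ρ < 1) :
    LipschitzOnWith (Real.toNNReal (Real.sqrt (1 - ρ^2))⁻¹) (graphE n)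
      (Metric.closedBall 0 ρ) := by
  have hpos : 0 < 1 - ρ^2 := by nlinarith
  have hspos : 0 < Real.sqrt (1-ρ^2) := Real.sqrt_pos.2 hpos
  rw [lipschitzOnWith_iff_dist_le_mul]
  intro v hv w hw
  rw [mem_closedBall, dist_zero_right] at hv hw
  have hKc : ((Real.toNNReal (Real.sqrt (1 - ρ^2))⁻¹ : ℝ≥0) : ℝ)
      = (Real.sqrt (1-ρ^2))⁻¹ := Real.coe_toNNReal ((Real.sqrt (1-ρ^2))⁻¹) (by positivity)
  rw [hKc]
  have habs : |‖v‖ - ‖w‖| ≤ dist v w := by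
    rw [dist_eq_norm]; exact abs_norm_sub_norm_le v w
  have hd2 : dist (graphE n v) (graphE n w)^2
      = (Real.sqrt (1-‖v‖^2) - Real.sqrt (1-‖w‖^2))^2 + dist v w ^2 := by
    rw [dist_sq_eq, dist_sq_eq, Fin.sum_univ_succ]
    simp
  have hsq : dist (graphE n v) (graphE n w)^2 ≤ (dist v w)^2 / (1-ρ^2) := by
    have h1 := sqrt_sub_sqrt_sq hρ1 (norm_nonneg v) (norm_nonneg w) hv hw
    have h2 : (‖v‖-‖w‖)^2 ≤ dist v w ^2 := by
      have := sq_abs (‖v‖ - ‖w‖)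
      nlinarith [abs_nonneg (‖v‖-‖w‖), dist_nonneg (x := v) (y := w)]
    rw [hd2, le_div_iff₀ hpos]
    nlinarith [h1, h2, mul_le_mul_of_nonneg_right h2 (sq_nonneg ρ)]
  apply le_of_pow_le_pow_left₀ (n := 2) two_ne_zero (by positivity)
  calc dist (graphE n v) (graphE n w)^2 ≤ (dist v w)^2/(1-ρ^2) := hsq
  _ = ((Real.sqrt (1-ρ^2))⁻¹ * dist v w)^2 := by
      rw [mul_pow, inv_pow, Real.sq_sqrt hpos.le]; ring

lemma cap_subset {n : ℕ} {r : ℝ} (y : Eu (n+1)) (h1 : ‖y‖ = 1) (h0 : 0 ≤ y 0)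
    (hr : ‖tailE y‖ ≤ r) : y ∈ graphE n '' (Metric.closedBall 0 r) := by
  refine ⟨tailE y, by simpa [mem_closedBall, dist_zero_right] using hr, ?_⟩
  have hs : ‖tailE y‖^2 = 1 - (y 0)^2 := by
    have := norm_split y; rw [h1] at this; nlinarith [this]
  ext i
  refine Fin.cases ?_ (fun j => ?_) i
  · rw [graphE_zero, hs]
    have : 1 - (1 - (y 0)^2) = (y 0)^2 := by ring
    rw [this, Real.sqrt_sq h0]
  · simp

lemma cball_bound (n : ℕ) :
    ∃ D : ℝ≥0∞, D ≠ ⊤ ∧ ∀ r : ℝ, 0 ≤ r →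
      μH[(n:ℝ)] (Metric.closedBall (0 : Eu n) r) ≤ D * ENNReal.ofReal (r^n) := by
  set K : ℝ≥0 := (Fintype.card (Fin n) : ℝ≥0) ^ ((1/(2:ℝ≥0∞)).toReal) with hK
  refine ⟨(K : ℝ≥0∞) ^ (n:ℝ) * ENNReal.ofReal (2^n), ?_, fun r hr => ?_⟩
  · exact ENNReal.mul_ne_top (ENNReal.rpow_ne_top_of_nonneg (by positivity) ENNReal.coe_ne_top)
      ENNReal.ofReal_ne_top
  · have ha : AntilipschitzWith K (WithLp.equiv 2 (Fin n → ℝ)) :=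
      PiLp.antilipschitzWith_ofLp 2 _
    have h1 : μH[(n:ℝ)] (Metric.closedBall (0 : Eu n) r)
        ≤ (K : ℝ≥0∞) ^ (n:ℝ) * μH[(n:ℝ)]
          (WithLp.equiv 2 (Fin n → ℝ) '' Metric.closedBall (0 : Eu n) r) :=
      ha.le_hausdorffMeasure_image (by positivity) _
    have h2 : (WithLp.equiv 2 (Fin n → ℝ)) '' Metric.closedBall (0 : Eu n) r
        ⊆ Metric.closedBall (0 : Fin n → ℝ) r := by
      rintro z ⟨w, hw, rfl⟩
      rw [mem_closedBall] at hw ⊢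
      calc dist (WithLp.equiv 2 (Fin n → ℝ) w) (0 : Fin n → ℝ)
          = dist (WithLp.equiv 2 (Fin n → ℝ) w) (WithLp.equiv 2 (Fin n → ℝ) 0) := by norm_num
        _ ≤ ((1:ℝ≥0):ℝ) * dist w 0 := (PiLp.lipschitzWith_ofLp 2 _).dist_le_mul w 0
        _ ≤ r := by simpa using hw
    have h3 : (μH[(n:ℝ)] : Measure (Fin n → ℝ)) (Metric.closedBall (0 : Fin n → ℝ) r)
        = ENNReal.ofReal ((2*r)^n) := by
      have hpi : (μH[(n:ℝ)] : Measure (Fin n → ℝ)) = volume := by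
        have := hausdorffMeasure_pi_real (ι := Fin n)
        simpa using this
      rw [hpi, Real.volume_pi_closedBall 0 hr, Fintype.card_fin]
    calc μH[(n:ℝ)] (Metric.closedBall (0 : Eu n) r)
        ≤ (K : ℝ≥0∞) ^ (n:ℝ) * μH[(n:ℝ)]
          (WithLp.equiv 2 (Fin n → ℝ) '' Metric.closedBall (0 : Eu n) r) := h1
      _ ≤ (K : ℝ≥0∞) ^ (n:ℝ) * ENNReal.ofReal ((2*r)^n) := by
          gcongr
          rw [← h3]; exact measure_mono h2
      _ = (K : ℝ≥0∞) ^ (n:ℝ) * ENNReal.ofReal (2^n) * ENNReal.ofReal (r^n) := by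
          rw [mul_pow, ENNReal.ofReal_mul (by positivity), mul_assoc]

lemma cap_bound (n : ℕ) {ρ : ℝ} (hρ0 : 0 ≤ ρ) (hρ1 : ρ < 1) :
    ∃ D : ℝ≥0∞, D ≠ ⊤ ∧ ∀ r : ℝ, 0 ≤ r → r ≤ ρ →
      μH[(n:ℝ)] {y : Eu (n+1) | ‖y‖ = 1 ∧ ‖tailE y‖ ≤ r} ≤ D * ENNReal.ofReal (r^n) := by
  obtain ⟨D₀, hD₀, hball⟩ := cball_bound n
  set K : ℝ≥0 := Real.toNNReal (Real.sqrt (1 - ρ^2))⁻¹ with hK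
  refine ⟨2 * (K : ℝ≥0∞) ^ (n:ℝ) * D₀, ?_, fun r hr0 hrρ => ?_⟩
  · exact ENNReal.mul_ne_top (ENNReal.mul_ne_top (by norm_num)
      (ENNReal.rpow_ne_top_of_nonneg (by positivity) ENNReal.coe_ne_top)) hD₀
  · have hsub : {y : Eu (n+1) | ‖y‖ = 1 ∧ ‖tailE y‖ ≤ r}
        ⊆ (graphE n '' Metric.closedBall 0 r)
          ∪ (Neg.neg '' (graphE n '' Metric.closedBall 0 r)) := by
      rintro y ⟨hy1, hyr⟩
      rcases le_or_gt 0 (y 0) with h | h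
      · exact Or.inl (cap_subset y hy1 h hyr)
      · refine Or.inr ⟨-y, cap_subset (-y) (by rw [norm_neg, hy1]) ?_ ?_, by simp⟩
        · have : (-y) 0 = -(y 0) := rfl
          rw [this]; linarith
        · have : tailE (-y) = -(tailE y) := by
            ext i; rfl
          rw [this, norm_neg]; exact hyr
    have hlip : LipschitzOnWith K (graphE n) (Metric.closedBall 0 r) :=
      (graphE_lip n hρ0 hρ1).mono (Metric.closedBall_subset_closedBall hrρ)
    have himg : μH[(n:ℝ)] (graphE n '' Metric.closedBall 0 r)
        ≤ (K : ℝ≥0∞) ^ (n:ℝ) * (D₀ * ENNReal.ofReal (r^n)) := by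
      refine le_trans (hlip.hausdorffMeasure_image_le (by positivity)) ?_
      gcongr
      exact hball r hr0
    have hneg : μH[(n:ℝ)] (Neg.neg '' (graphE n '' Metric.closedBall 0 r))
        = μH[(n:ℝ)] (graphE n '' Metric.closedBall 0 r) :=
      (isometry_neg (G := Eu (n+1))).hausdorffMeasure_image (Or.inl (by positivity)) _
    calc μH[(n:ℝ)] {y : Eu (n+1) | ‖y‖ = 1 ∧ ‖tailE y‖ ≤ r}
        ≤ μH[(n:ℝ)] ((graphE n '' Metric.closedBall 0 r)
          ∪ (Neg.neg '' (graphE n '' Metric.closedBall 0 r))) := measure_mono hsub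
      _ ≤ μH[(n:ℝ)] (graphE n '' Metric.closedBall 0 r)
          + μH[(n:ℝ)] (Neg.neg '' (graphE n '' Metric.closedBall 0 r)) := measure_union_le _ _
      _ ≤ 2 * ((K : ℝ≥0∞) ^ (n:ℝ) * (D₀ * ENNReal.ofReal (r^n))) := by
          rw [hneg, two_mul]; exact add_le_add himg himg
      _ = 2 * (K : ℝ≥0∞) ^ (n:ℝ) * D₀ * ENNReal.ofReal (r^n) := by ring

lemma sphere_fin (n : ℕ) : μH[(n:ℝ)] {y : Eu (n+1) | ‖y‖ = 1} ≠ ⊤ := by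
  set ρ : ℝ := Real.sqrt (n/(n+1)) with hρdef
  have hρ0 : 0 ≤ ρ := Real.sqrt_nonneg _
  have hρsq : ρ^2 = n/(n+1) := Real.sq_sqrt (by positivity)
  have hρ1 : ρ < 1 := by
    rw [hρdef, show (1:ℝ) = Real.sqrt 1 by simp]
    apply Real.sqrt_lt_sqrt (by positivity)
    rw [div_lt_one (by positivity)]
    norm_num
  obtain ⟨D, hD, hcap⟩ := cap_bound n hρ0 hρ1
  have hcover : {y : Eu (n+1) | ‖y‖ = 1} ⊆
      ⋃ i : Fin (n+1), {y : Eu (n+1) | ‖y‖ = 1 ∧ 1/(n+1) ≤ (y i)^2} := by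
    intro y hy
    simp only [mem_iUnion, mem_setOf_eq]
    by_contra hc
    push_neg at hc
    have hsum : ∑ i, (y i)^2 = 1 := by
      rw [← norm_sq_eq]; rw [mem_setOf_eq] at hy; rw [hy]; norm_num
    have hlt : ∑ i, (y i)^2 < ∑ _i : Fin (n+1), (1:ℝ)/(n+1) := by
      refine Finset.sum_lt_sum_of_nonempty ⟨0, Finset.mem_univ 0⟩ (fun i _ => ?_)
      have := hc i hy
      linarith [this]
    rw [hsum, Finset.sum_const] at hlt
    simp only [Finset.card_univ, Fintype.card_fin, nsmul_eq_mul] at hlt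
    rw [mul_one_div] at hlt
    have : ((n:ℝ)+1)/((n:ℝ)+1) = 1 := by positivity |> fun h => div_self (ne_of_gt h)
    push_cast at hlt
    rw [this] at hlt
    exact lt_irrefl _ hlt
  have hBi : ∀ i : Fin (n+1), μH[(n:ℝ)] {y : Eu (n+1) | ‖y‖ = 1 ∧ 1/(n+1) ≤ (y i)^2}
      ≤ D * ENNReal.ofReal (ρ^n) := by
    intro i
    set σ := LinearIsometryEquiv.piLpCongrLeft 2 ℝ ℝ (Equiv.swap (0 : Fin (n+1)) i) with hσ
    have happ : ∀ (v : Eu (n+1)) (j : Fin (n+1)),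
        σ v j = v (Equiv.swap (0 : Fin (n+1)) i j) := by
      intro v j
      rw [hσ, LinearIsometryEquiv.piLpCongrLeft_apply]
      simp [Equiv.piCongrLeft'_apply]
    have hsub : {y : Eu (n+1) | ‖y‖ = 1 ∧ 1/(n+1) ≤ (y i)^2}
        ⊆ σ '' {y : Eu (n+1) | ‖y‖ = 1 ∧ ‖tailE y‖ ≤ ρ} := by
      rintro y ⟨hy1, hyi⟩
      have hσn : ‖σ y‖ = 1 := by rw [σ.norm_map]; exact hy1
      have h0 : σ y 0 = y i := by rw [happ]; rw [Equiv.swap_apply_left]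
      refine ⟨σ y, ⟨hσn, ?_⟩, ?_⟩
      · have hns := norm_split (σ y)
        rw [hσn, h0] at hns
        have h1 : ‖tailE (σ y)‖^2 ≤ ρ^2 := by
          rw [hρsq]
          have hid : (n:ℝ)/((n:ℝ)+1) = 1 - 1/((n:ℝ)+1) := by
            field_simp; ring
          rw [hid]
          nlinarith [hns, hyi]
        calc ‖tailE (σ y)‖ = Real.sqrt (‖tailE (σ y)‖^2) :=
              (Real.sqrt_sq (norm_nonneg _)).symm
          _ ≤ Real.sqrt (ρ^2) := Real.sqrt_le_sqrt h1
          _ = ρ := Real.sqrt_sq hρ0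
      · ext j
        rw [happ, happ, Equiv.swap_apply_self]
    calc μH[(n:ℝ)] {y : Eu (n+1) | ‖y‖ = 1 ∧ 1/(n+1) ≤ (y i)^2}
        ≤ μH[(n:ℝ)] (σ '' {y : Eu (n+1) | ‖y‖ = 1 ∧ ‖tailE y‖ ≤ ρ}) := measure_mono hsub
      _ = μH[(n:ℝ)] {y : Eu (n+1) | ‖y‖ = 1 ∧ ‖tailE y‖ ≤ ρ} :=
          σ.isometry.hausdorffMeasure_image (Or.inl (by positivity)) _
      _ ≤ D * ENNReal.ofReal (ρ^n) := hcap ρ hρ0 le_rfl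
  have htot : μH[(n:ℝ)] {y : Eu (n+1) | ‖y‖ = 1}
      ≤ ∑ i : Fin (n+1), (D * ENNReal.ofReal (ρ^n)) := by
    refine le_trans (measure_mono hcover) (le_trans (measure_iUnion_fintype_le _ _) ?_)
    exact Finset.sum_le_sum (fun i _ => hBi i)
  have hfin : (∑ _i : Fin (n+1), (D * ENNReal.ofReal (ρ^n))) ≠ ⊤ := by
    rw [Finset.sum_const, nsmul_eq_mul]
    exact ENNReal.mul_ne_top (ENNReal.natCast_ne_top _) (ENNReal.mul_ne_top hD ENNReal.ofReal_ne_top)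
  exact ne_top_of_le_ne_top hfin htot

lemma normP {n : ℕ} (y : Eu (n+1)) :
    ‖y - y 0 • EuclideanSpace.single (0 : Fin (n+1)) (1:ℝ)‖ = ‖tailE y‖ := by
  have hsq : ‖y - y 0 • EuclideanSpace.single (0 : Fin (n+1)) (1:ℝ)‖^2 = ‖tailE y‖^2 := by
    rw [norm_sq_eq, norm_sq_eq, Fin.sum_univ_succ]
    have h0 : (y - y 0 • EuclideanSpace.single (0 : Fin (n+1)) (1:ℝ)) 0 = 0 := by
      simp [EuclideanSpace.single_apply]
    have hs : ∀ j : Fin n, (y - y 0 • EuclideanSpace.single (0 : Fin (n+1)) (1:ℝ)) j.succ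
        = y j.succ := by
      intro j
      simp [EuclideanSpace.single_apply, (Fin.succ_ne_zero j)]
    rw [h0]
    simp only [hs, tailE_apply]
    norm_num
  calc ‖y - y 0 • EuclideanSpace.single (0 : Fin (n+1)) (1:ℝ)‖
      = Real.sqrt (‖y - y 0 • EuclideanSpace.single (0 : Fin (n+1)) (1:ℝ)‖^2) :=
        (Real.sqrt_sq (norm_nonneg _)).symm
    _ = Real.sqrt (‖tailE y‖^2) := by rw [hsq]
    _ = ‖tailE y‖ := Real.sqrt_sq (norm_nonneg _)

lemma Pzero {n : ℕ} (y : Eu (n+1)) :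
    (y - y 0 • EuclideanSpace.single (0:Fin (n+1)) (1:ℝ)) 0 = 0 := by
  simp [EuclideanSpace.single_apply]

lemma tailE_le_one {n : ℕ} (y : Eu (n+1)) (hy : ‖y‖ = 1) : ‖tailE y‖ ≤ 1 := by
  have h := norm_split y
  rw [hy] at h
  nlinarith [norm_nonneg (tailE y), sq_nonneg (y 0)]

set_option maxHeartbeats 1000000 in
/-- **Core of Proposition 2.3** (`d ≥ 3`, written as `d = m + 3`): in the open infinite
circular cylinder of radius `M` about the first coordinate axis, from any boundary
point the second moment of the horizontal displacement of the cosine-law chord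
is finite. -/
theorem cylinder_cosine_second_moment_finite
    (m : ℕ) (M : ℝ) (hM : 0 < M)
    (C : Set (EuclideanSpace ℝ (Fin (m + 3))))
    (hC : C = {y : EuclideanSpace ℝ (Fin (m + 3)) |
      ‖y - y 0 • EuclideanSpace.single (0 : Fin (m + 3)) (1 : ℝ)‖ < M})
    (nvec : EuclideanSpace ℝ (Fin (m + 3)) → EuclideanSpace ℝ (Fin (m + 3)))
    (hn : ∀ x, nvec x =
      -(M⁻¹ • (x - x 0 • EuclideanSpace.single (0 : Fin (m + 3)) (1 : ℝ))))
    (ℓ : EuclideanSpace ℝ (Fin (m + 3)) →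
      Metric.sphere (0 : EuclideanSpace ℝ (Fin (m + 3))) 1 → ℝ)
    (hℓ : ∀ x h, ℓ x h =
      sInf {t : ℝ | 0 < t ∧ x + t • (h : EuclideanSpace ℝ (Fin (m + 3))) ∉ C})
    (x : EuclideanSpace ℝ (Fin (m + 3))) (hx : x ∈ frontier C) :
    (∫⁻ h in {h : Metric.sphere (0 : EuclideanSpace ℝ (Fin (m + 3))) 1 |
        0 < ⟪(h : EuclideanSpace ℝ (Fin (m + 3))), nvec x⟫},
      ENNReal.ofReal ((ℓ x h * (h : EuclideanSpace ℝ (Fin (m + 3))) 0) ^ 2 *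
        ⟪(h : EuclideanSpace ℝ (Fin (m + 3))), nvec x⟫)
      ∂(μH[(m + 2 : ℝ)])) < ⊤ := by
  classical
  set e0 : Eu (m+3) := EuclideanSpace.single (0 : Fin (m + 3)) (1 : ℝ) with he0
  set Px : Eu (m+3) := x - x 0 • e0 with hPxdef
  set S : Set (Metric.sphere (0 : Eu (m+3)) 1) :=
    {h : Metric.sphere (0 : Eu (m+3)) 1 | 0 < ⟪(h : Eu (m+3)), nvec x⟫} with hSdef
  -- continuity of the defining function of the cylinder
  have hf_cont : Continuous fun y : Eu (m+3) => ‖y - y 0 • e0‖ := by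
    have h1 : Continuous fun y : Eu (m+3) => y 0 := by fun_prop
    exact (continuous_id.sub (h1.smul continuous_const)).norm
  have hCeq : C = (fun y : Eu (m+3) => ‖y - y 0 • e0‖) ⁻¹' (Iio M) := by rw [hC]; rfl
  have hCopen : IsOpen C := by rw [hCeq]; exact isOpen_Iio.preimage hf_cont
  -- boundary point has ‖Px‖ = M
  have hxM : ‖Px‖ = M := by
    have hx1 : x ∈ closure C := hx.1
    have hx2 : x ∉ C := fun hxc => hx.2 (by rwa [hCopen.interior_eq])
    have hle : ‖Px‖ ≤ M := by
      have hsub := Continuous.closure_preimage_subset hf_cont (Iio M)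
      rw [← hCeq] at hsub
      have h2 := hsub hx1
      rw [closure_Iio] at h2
      exact h2
    have hge : M ≤ ‖Px‖ := by
      by_contra hlt
      push_neg at hlt
      exact hx2 (by rw [hCeq]; exact hlt)
    linarith
  have hsphere : ∀ h : Metric.sphere (0 : Eu (m+3)) 1, ‖(h : Eu (m+3))‖ = 1 :=
    fun h => mem_sphere_zero_iff_norm.mp h.2
  have hPx0 : Px 0 = 0 := Pzero x
  -- inner products
  have hinner : ∀ h : Metric.sphere (0 : Eu (m+3)) 1,
      ⟪(h : Eu (m+3)), nvec x⟫ = -(M⁻¹ * ⟪(h : Eu (m+3)), Px⟫) := by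
    intro h
    rw [hn x, inner_neg_right, real_inner_smul_right]
  have hinnerP : ∀ h : Metric.sphere (0 : Eu (m+3)) 1,
      ⟪(h : Eu (m+3)), Px⟫ = ⟪(h : Eu (m+3)) - (h : Eu (m+3)) 0 • e0, Px⟫ := by
    intro h
    rw [inner_sub_left, real_inner_smul_left]
    have he : ⟪e0, Px⟫ = Px 0 := by
      simp [he0, EuclideanSpace.inner_single_left]
    rw [he, hPx0]
    ring
  -- pointwise bound on S
  have hpoint : ∀ h ∈ S,
      ENNReal.ofReal ((ℓ x h * (h : Eu (m+3)) 0) ^ 2 * ⟪(h : Eu (m+3)), nvec x⟫)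
        ≤ ENNReal.ofReal (4*M^2 / ‖tailE (h : Eu (m+3))‖) := by
    intro h hh
    set hv : Eu (m+3) := (h : Eu (m+3)) with hhv
    set Ph : Eu (m+3) := hv - hv 0 • e0 with hPhdef
    set nn : ℝ := ‖tailE hv‖ with hnn
    have hPhnorm : ‖Ph‖ = nn := normP hv
    set hnv : ℝ := ⟪hv, nvec x⟫ with hhnv
    have hnvpos : 0 < hnv := hh
    have hPxinner : ⟪hv, Px⟫ = -(M * hnv) := by
      have := hinner h
      rw [← hhnv] at this
      field_simp at this ⊢
      linarith [this]
    -- Cauchy-Schwarz : hnv ≤ nn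
    have hcs : hnv ≤ nn := by
      have h1 : |⟪Ph, Px⟫| ≤ ‖Ph‖ * ‖Px‖ := abs_real_inner_le_norm Ph Px
      have h2 : ⟪Ph, Px⟫ = -(M*hnv) := by rw [← hinnerP h, hPxinner]
      rw [h2, hPhnorm, hxM] at h1
      have h0 : M * hnv ≤ |(-(M*hnv))| := by rw [abs_neg]; exact le_abs_self _
      have h3 : M * hnv ≤ nn * M := le_trans h0 h1
      nlinarith [hM]
    have hnnpos : 0 < nn := by
      rcases lt_or_ge 0 nn with h' | h'
      · exact h'
      · exfalso
        have : nn = 0 := le_antisymm h' (by rw [hnn]; positivity)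
        nlinarith
    -- exit length bound
    set tstar : ℝ := 2*M*hnv/nn^2 with htstar
    have htpos : 0 < tstar := by positivity
    have hexit : x + tstar • hv ∉ C := by
      have hPlin : (x + tstar • hv) - (x + tstar • hv) 0 • e0 = Px + tstar • Ph := by
        have happ : (x + tstar • hv) 0 = x 0 + tstar * hv 0 := rfl
        rw [happ, hPxdef, hPhdef]
        module
      have hip : ⟪Px, Ph⟫ = -(M*hnv) := by
        rw [real_inner_comm, ← hinnerP h, hPxinner]
      have hnrm : ‖Px + tstar • Ph‖^2 = M^2 := by
        rw [norm_add_sq_real, real_inner_smul_right, hip, hxM, norm_smul,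
          Real.norm_eq_abs, mul_pow, sq_abs, hPhnorm, htstar]
        field_simp
        ring
      have hnrm' : ‖(x + tstar • hv) - (x + tstar • hv) 0 • e0‖ = M := by
        rw [hPlin]
        rw [show M = Real.sqrt (M^2) from (Real.sqrt_sq hM.le).symm, ← hnrm,
          Real.sqrt_sq (norm_nonneg _)]
      rw [hCeq]
      intro hmem
      rw [mem_preimage, mem_Iio, hnrm'] at hmem
      exact lt_irrefl _ hmem
    have hmemset : tstar ∈ {t : ℝ | 0 < t ∧ x + t • hv ∉ C} := ⟨htpos, hexit⟩
    have hbdd : BddBelow {t : ℝ | 0 < t ∧ x + t • hv ∉ C} :=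
      ⟨0, fun t ht => ht.1.le⟩
    have hl0 : 0 ≤ ℓ x h := by
      rw [hℓ x h]
      exact le_csInf ⟨tstar, hmemset⟩ (fun t ht => ht.1.le)
    have hlle : ℓ x h ≤ tstar := by
      rw [hℓ x h]
      exact csInf_le hbdd hmemset
    -- squared coordinate bound
    have hc0 : (hv 0)^2 ≤ 1 := by
      have h1 := norm_split hv
      rw [hsphere h] at h1
      nlinarith [sq_nonneg (‖tailE hv‖)]
    -- final real inequality
    apply ENNReal.ofReal_le_ofReal
    rw [le_div_iff₀ hnnpos]
    have ht2 : tstar^2 * nn^4 = 4*M^2*hnv^2 := by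
      rw [htstar]; field_simp; ring
    have h3 : hnv^3 ≤ nn^3 := by
      apply pow_le_pow_left₀ hnvpos.le hcs
    have e2 : (tstar^2 * hnv * nn) * nn^3 ≤ (4*M^2) * nn^3 := by
      calc (tstar^2*hnv*nn)*nn^3 = (tstar^2*nn^4)*hnv := by ring
        _ = 4*M^2*hnv^2*hnv := by rw [ht2]
        _ = 4*M^2*hnv^3 := by ring
        _ ≤ 4*M^2*nn^3 := by nlinarith [h3, sq_nonneg M]
    have e3 : tstar^2*hnv*nn ≤ 4*M^2 :=
      le_of_mul_le_mul_right e2 (pow_pos hnnpos 3)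
    have e4 : (ℓ x h * hv 0)^2 ≤ tstar^2 := by
      have hsq : (ℓ x h)^2 ≤ tstar^2 := by nlinarith
      calc (ℓ x h * hv 0)^2 = (ℓ x h)^2 * (hv 0)^2 := by ring
        _ ≤ tstar^2 * 1 := by
            apply mul_le_mul hsq hc0 (sq_nonneg _) (sq_nonneg _)
        _ = tstar^2 := by ring
    calc (ℓ x h * hv 0)^2 * hnv * nn ≤ tstar^2 * hnv * nn := by
          apply mul_le_mul_of_nonneg_right
            (mul_le_mul_of_nonneg_right e4 hnvpos.le) hnnpos.le
      _ ≤ 4*M^2 := e3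
  -- measure-theoretic part
  set n : ℕ := m + 2 with hndef
  have hcast : (m + 2 : ℝ) = ((n:ℕ):ℝ) := by rw [hndef]; push_cast; ring
  rw [hcast]
  have hn2 : 2 ≤ n := by omega
  set q : ℝ := (2:ℝ)⁻¹ with hq
  have hq0 : (0:ℝ) < q := by norm_num
  have hq1 : q < 1 := by norm_num
  -- bridge from the subtype sphere to the ambient space
  have hbridge : ∀ A : Set (Metric.sphere (0 : Eu (m+3)) 1),
      μH[(n:ℝ)] A = μH[(n:ℝ)] (Subtype.val '' A) :=
    fun A => (isometry_subtype_coe.hausdorffMeasure_image (Or.inl (by positivity)) A).symm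
  obtain ⟨D, hD, hcap⟩ := cap_bound n (by norm_num : (0:ℝ) ≤ 1/2) (by norm_num)
  have hSfin : μH[(n:ℝ)] (univ : Set (Metric.sphere (0 : Eu (m+3)) 1)) ≠ ⊤ := by
    rw [hbridge]
    refine ne_top_of_le_ne_top (sphere_fin n) (measure_mono ?_)
    rintro y ⟨h, -, rfl⟩
    exact hsphere h
  set A : ℕ → Set (Metric.sphere (0 : Eu (m+3)) 1) :=
    fun k => {h | ‖tailE (h : Eu (m+3))‖ ∈ Ioc (q^(k+1)) (q^k)} with hA
  have htcont : Continuous fun h : Metric.sphere (0 : Eu (m+3)) 1 =>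
      ‖tailE (h : Eu (m+3))‖ := by
    have h1 : Continuous (tailE : Eu (m+2+1) → Eu (m+2)) := by
      refine (PiLp.continuous_toLp 2 _).comp (continuous_pi fun i => ?_)
      fun_prop
    exact (h1.comp continuous_subtype_val).norm
  have hAmeas : ∀ k, MeasurableSet (A k) := fun k =>
    htcont.measurable measurableSet_Ioc
  have hSmeas : MeasurableSet S := by
    have : IsOpen S := isOpen_lt continuous_const
      (continuous_subtype_val.inner continuous_const)
    exact this.measurableSet
  set B : Metric.sphere (0 : Eu (m+3)) 1 → ℝ≥0∞ :=
    fun h => ENNReal.ofReal (4*M^2 / ‖tailE (h : Eu (m+3))‖) with hB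
  set c : ℕ → ℝ≥0∞ := fun k => ENNReal.ofReal (4*M^2 / q^(k+1)) with hc
  -- pointwise domination by the dyadic sum
  have hBsum : ∀ h, B h ≤ ∑' k, (A k).indicator (fun _ => c k) h := by
    intro h
    rcases eq_or_lt_of_le (norm_nonneg (tailE (h : Eu (m+3)))) with h0 | h0
    · have hz : B h = 0 := by
        rw [hB]; simp only []; rw [← h0, div_zero, ENNReal.ofReal_zero]
      rw [hz]; exact zero_le
    · set t : ℝ := ‖tailE (h : Eu (m+3))‖ with ht
      have ht1 : t ≤ 1 := tailE_le_one _ (hsphere h)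
      have hex : ∃ k, q^(k+1) < t := by
        obtain ⟨k, hk⟩ := exists_pow_lt_of_lt_one h0 hq1
        exact ⟨k, lt_of_le_of_lt
          (pow_le_pow_of_le_one hq0.le hq1.le (Nat.le_succ k)) hk⟩
      have hK1 : q^(Nat.find hex + 1) < t := Nat.find_spec hex
      have hK2 : t ≤ q^(Nat.find hex) := by
        rcases Nat.eq_zero_or_pos (Nat.find hex) with h' | h'
        · rw [h']; simpa using ht1
        · obtain ⟨j, hj⟩ : ∃ j, Nat.find hex = j+1 :=
            ⟨Nat.find hex - 1, (Nat.succ_pred_eq_of_pos h').symm⟩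
          rw [hj]
          by_contra hcon
          push_neg at hcon
          exact Nat.find_min hex (by omega) hcon
      have hmem : h ∈ A (Nat.find hex) := ⟨hK1, hK2⟩
      have hcle : B h ≤ c (Nat.find hex) := by
        rw [hB, hc]
        apply ENNReal.ofReal_le_ofReal
        exact div_le_div_of_nonneg_left (by positivity) (by positivity) hK1.le
      calc B h ≤ c (Nat.find hex) := hcle
        _ = (A (Nat.find hex)).indicator (fun _ => c (Nat.find hex)) h :=
            (indicator_of_mem hmem (fun _ => c (Nat.find hex))).symm
        _ ≤ ∑' k, (A k).indicator (fun _ => c k) h := ENNReal.le_tsum _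
  -- per-term bound
  set Q : ℝ≥0∞ := ENNReal.ofReal q with hQ
  set Dtot : ℝ≥0∞ := ENNReal.ofReal (8*M^2) * (D + μH[(n:ℝ)]
    (univ : Set (Metric.sphere (0 : Eu (m+3)) 1))) with hDtot
  have hDtot_ne : Dtot ≠ ⊤ := by
    rw [hDtot]
    exact ENNReal.mul_ne_top ENNReal.ofReal_ne_top (ENNReal.add_ne_top.mpr ⟨hD, hSfin⟩)
  have hterm : ∀ k, c k * μH[(n:ℝ)] (A k) ≤ Dtot * Q^k := by
    intro k
    rcases Nat.eq_zero_or_pos k with hk0 | hk1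
    · subst hk0
      have h1 : μH[(n:ℝ)] (A 0) ≤ μH[(n:ℝ)]
          (univ : Set (Metric.sphere (0 : Eu (m+3)) 1)) := measure_mono (subset_univ _)
      have h2 : c 0 ≤ ENNReal.ofReal (8*M^2) := by
        rw [hc]
        apply ENNReal.ofReal_le_ofReal
        rw [hq]; norm_num
        nlinarith [sq_nonneg M]
      calc c 0 * μH[(n:ℝ)] (A 0)
          ≤ ENNReal.ofReal (8*M^2) * μH[(n:ℝ)]
              (univ : Set (Metric.sphere (0 : Eu (m+3)) 1)) := mul_le_mul' h2 h1
        _ ≤ Dtot * 1 := by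
            rw [hDtot, mul_one]
            exact mul_le_mul' le_rfl (le_add_self)
        _ = Dtot * Q^0 := by rw [pow_zero]
    · -- k ≥ 1 : use the cap bound
      have hqk2 : q^k ≤ 1/2 := by
        calc q^k ≤ q^1 := pow_le_pow_of_le_one hq0.le hq1.le hk1
          _ = 1/2 := by rw [hq]; norm_num
      have hcapk : μH[(n:ℝ)] (A k) ≤ D * ENNReal.ofReal ((q^k)^n) := by
        rw [hbridge]
        refine le_trans (measure_mono ?_) (hcap (q^k) (by positivity) hqk2)
        rintro y ⟨hh, hmem, rfl⟩
        exact ⟨hsphere hh, hmem.2⟩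
      have hreal : 4*M^2/q^(k+1)*(q^k)^n ≤ 8*M^2*q^k := by
        have h1 : (q^k)^n ≤ (q^k)^2 :=
          pow_le_pow_of_le_one (by positivity) (pow_le_one₀ hq0.le hq1.le) hn2
        rw [div_mul_eq_mul_div, div_le_iff₀ (by positivity)]
        calc 4*M^2*(q^k)^n ≤ 4*M^2*(q^k)^2 := by nlinarith [sq_nonneg M]
          _ = 8*M^2*q^k*q^(k+1) := by rw [hq]; ring
      calc c k * μH[(n:ℝ)] (A k) ≤ c k * (D * ENNReal.ofReal ((q^k)^n)) :=
            mul_le_mul' le_rfl hcapk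
        _ = D * (c k * ENNReal.ofReal ((q^k)^n)) := by ring
        _ = D * ENNReal.ofReal (4*M^2/q^(k+1) * (q^k)^n) := by
            rw [hc, ← ENNReal.ofReal_mul (by positivity)]
        _ ≤ D * ENNReal.ofReal (8*M^2*q^k) := by
            exact mul_le_mul' le_rfl (ENNReal.ofReal_le_ofReal hreal)
        _ = D * (ENNReal.ofReal (8*M^2) * Q^k) := by
            rw [hQ, ← ENNReal.ofReal_pow hq0.le,
              ← ENNReal.ofReal_mul (by positivity)]
        _ ≤ Dtot * Q^k := by
            rw [hDtot]
            calc D * (ENNReal.ofReal (8*M^2) * Q^k)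
                = (ENNReal.ofReal (8*M^2) * D) * Q^k := by ring
              _ ≤ (ENNReal.ofReal (8*M^2) * (D + μH[(n:ℝ)]
                  (univ : Set (Metric.sphere (0 : Eu (m+3)) 1)))) * Q^k :=
                mul_le_mul' (mul_le_mul' le_rfl le_self_add) le_rfl
  -- assemble
  have hQ1 : Q < 1 := by
    rw [hQ]
    exact ENNReal.ofReal_lt_one.mpr (by norm_num)
  calc (∫⁻ h in S, ENNReal.ofReal ((ℓ x h * (h : Eu (m+3)) 0) ^ 2 *
        ⟪(h : Eu (m+3)), nvec x⟫) ∂(μH[(n:ℝ)]))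
      ≤ ∫⁻ h in S, B h ∂(μH[(n:ℝ)]) := setLIntegral_mono' hSmeas hpoint
    _ ≤ ∫⁻ h, B h ∂(μH[(n:ℝ)]) := setLIntegral_le_lintegral _ _
    _ ≤ ∫⁻ h, ∑' k, (A k).indicator (fun _ => c k) h ∂(μH[(n:ℝ)]) :=
        lintegral_mono hBsum
    _ = ∑' k, ∫⁻ h, (A k).indicator (fun _ => c k) h ∂(μH[(n:ℝ)]) :=
        lintegral_tsum (fun k => (measurable_const.indicator (hAmeas k)).aemeasurable)
    _ = ∑' k, c k * μH[(n:ℝ)] (A k) := by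
        refine tsum_congr fun k => ?_
        rw [lintegral_indicator (hAmeas k), setLIntegral_const]
    _ ≤ ∑' k, Dtot * Q^k := ENNReal.tsum_le_tsum hterm
    _ = Dtot * ∑' k, Q^k := ENNReal.tsum_mul_left
    _ < ⊤ := by
        rw [ENNReal.tsum_geometric]
        have hne : (1 - Q) ≠ 0 := by
          simpa [tsub_eq_zero_iff_le] using not_le.mpr hQ1
        exact ENNReal.mul_lt_top hDtot_ne.lt_top
          (ENNReal.inv_lt_top.mpr (pos_iff_ne_zero.mpr hne))
end
end

section
/- (Core of Proposition 2.4: infinite projected second moment in a two-dimensional strip.) Let r > 0 and consider in ℝ² the infinite horizontal strip {y : 0 < y·e₂ < r}, a boundary point x on the lower boundary (x·e₂ = 0) with inward unit normal e₂. For h ∈ S¹ with h·e₂ > 0, the chord from x in direction h exits the strip at distance ℓ(h) = r/(h·e₂), so its horizontal displacement is ℓ(h)(h·e₁) = r (h·e₁)/(h·e₂). Then the second moment of this horizontal displacement under the cosine law is infinite: ∫_{{h ∈ S¹ : h·e₂ > 0}} (r (h·e₁)/(h·e₂))² (h·e₂) dσ(h) = +∞, where σ denotes the 1-dimensional Hausdorff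 measure on the unit circle S¹. -/
open MeasureTheory ENNReal
open scoped ENNReal

namespace StripAux

local notation "E" => EuclideanSpace ℝ (Fin 2)

lemma abs_coord_le_norm (v : E) (i : Fin 2) : |v i| ≤ ‖v‖ := by
  rw [EuclideanSpace.norm_eq]
  rw [← Real.sqrt_sq_eq_abs (v i)]
  apply Real.sqrt_le_sqrt
  have := Finset.single_le_sum (f := fun j => ‖v j‖ ^ 2) (fun j _ => by positivity)
    (Finset.mem_univ i)
  simpa [Real.norm_eq_abs, sq_abs] using this

lemma coord_lipschitz :
    LipschitzWith 1 (fun h : Metric.sphere (0 : E) 1 => (h : E) 1) := by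
  apply LipschitzWith.of_dist_le_mul
  intro x y
  rw [NNReal.coe_one, one_mul, Subtype.dist_eq, Real.dist_eq, dist_eq_norm]
  have := abs_coord_le_norm ((x : E) - (y : E)) 1
  simpa using this

lemma sum_sq (h : Metric.sphere (0 : E) 1) :
    ((h : E) 0) ^ 2 + ((h : E) 1) ^ 2 = 1 := by
  have hn : ‖(h : E)‖ = 1 := by
    simpa using mem_sphere_zero_iff_norm.mp h.2
  rw [EuclideanSpace.norm_eq, Fin.sum_univ_two] at hn
  have := congrArg (· ^ 2) hn
  simp only [Real.sq_sqrt (by positivity : (0:ℝ) ≤ ‖(h : E) 0‖ ^ 2 + ‖(h : E) 1‖ ^ 2)] at this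
  simpa [sq_abs] using this

lemma exists_point (t : ℝ) (ht : t ^ 2 ≤ 1) :
    ∃ h : Metric.sphere (0 : E) 1, (h : E) 1 = t := by
  set v : E := WithLp.toLp 2 ![Real.sqrt (1 - t ^ 2), t]
  have hv : ‖v‖ = 1 := by
    rw [EuclideanSpace.norm_eq, Fin.sum_univ_two]
    have h0 : v 0 = Real.sqrt (1 - t ^ 2) := rfl
    have h1 : v 1 = t := rfl
    rw [h0, h1, Real.norm_eq_abs, Real.norm_eq_abs, sq_abs, sq_abs,
      Real.sq_sqrt (by linarith)]
    rw [show 1 - t ^ 2 + t ^ 2 = 1 by ring, Real.sqrt_one]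
  exact ⟨⟨v, by simpa using hv⟩, rfl⟩

end StripAux

open StripAux

/-- **Core of Proposition 2.4:** in the two-dimensional strip of width `r`, the second
moment under the cosine law of the horizontal displacement `r (h·e₁)/(h·e₂)` of the
chord leaving the lower boundary is infinite. -/
theorem strip_cosine_second_moment_infinite
    (r : ℝ) (hr : 0 < r) :
    (∫⁻ h in {h : Metric.sphere (0 : EuclideanSpace ℝ (Fin 2)) 1 |
        0 < (h : EuclideanSpace ℝ (Fin 2)) 1},
      ENNReal.ofReal ((r * (h : EuclideanSpace ℝ (Fin 2)) 0 /
          (h : EuclideanSpace ℝ (Fin 2)) 1) ^ 2 *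
        (h : EuclideanSpace ℝ (Fin 2)) 1)
      ∂(μH[(1 : ℝ)])) = ⊤ := by
  set E2 := EuclideanSpace ℝ (Fin 2)
  set Sp := Metric.sphere (0 : E2) 1
  set μ : Measure Sp := μH[(1:ℝ)]
  set f : Sp → ℝ≥0∞ := fun h =>
    ENNReal.ofReal ((r * (h : E2) 0 / (h : E2) 1) ^ 2 * (h : E2) 1) with hf
  set coord : Sp → ℝ := fun h => (h : E2) 1 with hcoord
  have hcoordMeas : Measurable coord := coord_lipschitz.continuous.measurable
  set a : ℕ → ℝ := fun n => (1/2 : ℝ) ^ (n + 1) with ha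
  have ha_pos : ∀ n, 0 < a n := fun n => by positivity
  have ha_le : ∀ n, a n ≤ 1/2 := fun n => by
    calc a n ≤ (1/2 : ℝ) ^ 1 := by
          apply pow_le_pow_of_le_one (by norm_num) (by norm_num); omega
      _ = 1/2 := by norm_num
  set A : ℕ → Set Sp := fun n => {h | coord h ∈ Set.Ioc (a (n+1)) (a n)} with hA
  have hAmeas : ∀ n, MeasurableSet (A n) := fun n =>
    hcoordMeas measurableSet_Ioc
  have hanti : Antitone a := by
    apply antitone_nat_of_succ_le
    intro k
    apply pow_le_pow_of_le_one (by norm_num) (by norm_num); omega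
  have hAdisj : Pairwise (Function.onFun Disjoint A) := by
    intro m n hmn
    rw [Function.onFun, Set.disjoint_left]
    rintro h hm hn
    rcases hmn.lt_or_gt with hlt | hlt
    · have h1 := le_trans hn.2 (hanti (show m+1 ≤ n by omega))
      exact absurd h1 (not_le.mpr hm.1)
    · have h1 := le_trans hm.2 (hanti (show n+1 ≤ m by omega))
      exact absurd h1 (not_le.mpr hn.1)
  have hsub : (⋃ n, A n) ⊆ {h : Sp | 0 < (h : E2) 1} := by
    intro h hh
    rcases Set.mem_iUnion.mp hh with ⟨n, hn⟩
    exact lt_trans (ha_pos (n+1)) hn.1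
  -- lower bound on each piece
  have hfmeas : Measurable f := by
    apply Measurable.ennreal_ofReal
    have h0 : Measurable (fun h : Sp => (h : E2) 0) := by
      have : LipschitzWith 1 (fun h : Sp => (h : E2) 0) := by
        apply LipschitzWith.of_dist_le_mul
        intro x y
        rw [NNReal.coe_one, one_mul, Subtype.dist_eq, Real.dist_eq, dist_eq_norm]
        exact abs_coord_le_norm ((x : E2) - (y : E2)) 0
      exact this.continuous.measurable
    exact (((measurable_const.mul h0).div hcoordMeas).pow_const 2).mul hcoordMeas
  have hmeasA : ∀ n, ENNReal.ofReal (a (n+1)) ≤ μ (A n) := by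
    intro n
    have himg : Set.Ioc (a (n+1)) (a n) ⊆ coord '' (A n) := by
      intro t ht
      have ht1 : t ^ 2 ≤ 1 := by
        have h1 : 0 < t := lt_trans (ha_pos (n+1)) ht.1
        have h2 : t ≤ 1/2 := le_trans ht.2 (ha_le n)
        nlinarith
      obtain ⟨h, hh⟩ := exists_point t ht1
      exact ⟨h, by simp only [hA, hcoord, Set.mem_setOf_eq, hh]; exact ht, hh⟩
    have := coord_lipschitz.hausdorffMeasure_image_le (by norm_num : (0:ℝ) ≤ 1) (A n)
    rw [ENNReal.coe_one, ENNReal.one_rpow, one_mul] at this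
    calc ENNReal.ofReal (a (n+1))
        = μH[(1:ℝ)] (Set.Ioc (a (n+1)) (a n)) := by
          rw [MeasureTheory.hausdorffMeasure_real, Real.volume_Ioc]
          congr 1
          have : a n = 2 * a (n+1) := by
            simp [ha, pow_succ]; ring
          rw [this]; ring
      _ ≤ μH[(1:ℝ)] (coord '' (A n)) := measure_mono himg
      _ ≤ μ (A n) := this
  have hfA : ∀ n, ∀ h ∈ A n, ENNReal.ofReal (3/4 * r ^ 2 / a n) ≤ f h := by
    intro n h hh
    apply ENNReal.ofReal_le_ofReal
    have h1pos : 0 < (h : E2) 1 := lt_trans (ha_pos (n+1)) hh.1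
    have h1le : (h : E2) 1 ≤ a n := hh.2
    have hsq : ((h : E2) 0) ^ 2 = 1 - ((h : E2) 1) ^ 2 := by
      have := sum_sq h; linarith
    have h1half : (h : E2) 1 ≤ 1/2 := le_trans h1le (ha_le n)
    have h0sq : (3/4 : ℝ) ≤ ((h : E2) 0) ^ 2 := by nlinarith
    have : (r * (h : E2) 0 / (h : E2) 1) ^ 2 * (h : E2) 1
        = r ^ 2 * ((h : E2) 0) ^ 2 / (h : E2) 1 := by
      field_simp
    rw [this]
    rw [div_le_div_iff₀ (ha_pos n) h1pos]
    have hrsq : (0:ℝ) ≤ r ^ 2 := by positivity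
    calc 3/4 * r ^ 2 * (h : E2) 1 ≤ r ^ 2 * ((h : E2) 0) ^ 2 * (h : E2) 1 := by
          nlinarith [mul_nonneg (mul_nonneg hrsq (sub_nonneg.mpr h0sq)) h1pos.le]
      _ ≤ r ^ 2 * ((h : E2) 0) ^ 2 * a n := by
          apply mul_le_mul_of_nonneg_left h1le
          positivity
  -- assemble
  have key : (⊤ : ℝ≥0∞) ≤ ∫⁻ h in {h : Sp | 0 < (h : E2) 1}, f h ∂μ := by
    calc (⊤ : ℝ≥0∞) = ∑' _ : ℕ, ENNReal.ofReal (3/8 * r ^ 2) := by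
          rw [ENNReal.tsum_const_eq_top_of_ne_zero]
          simp only [ne_eq, ENNReal.ofReal_eq_zero, not_le]
          positivity
      _ ≤ ∑' n, ENNReal.ofReal (3/4 * r ^ 2 / a n) * ENNReal.ofReal (a (n+1)) := by
          apply ENNReal.tsum_le_tsum
          intro n
          rw [← ENNReal.ofReal_mul (by positivity)]
          apply ENNReal.ofReal_le_ofReal
          have han := ha_pos n
          have h2 : a (n+1) = a n / 2 := by simp [ha, pow_succ]; ring
          rw [h2]
          have h3 : 3/4 * r ^ 2 / a n * (a n / 2) = 3/8 * r ^ 2 := by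
            field_simp
            ring
          rw [h3]
      _ ≤ ∑' n, ENNReal.ofReal (3/4 * r ^ 2 / a n) * μ (A n) := by
          apply ENNReal.tsum_le_tsum
          intro n
          exact mul_le_mul_of_nonneg_left (hmeasA n) (by simp)
      _ ≤ ∑' n, ∫⁻ h in A n, f h ∂μ := by
          apply ENNReal.tsum_le_tsum
          intro n
          rw [← setLIntegral_const]
          exact setLIntegral_mono hfmeas (hfA n)
      _ = ∫⁻ h in ⋃ n, A n, f h ∂μ := (lintegral_iUnion hAmeas hAdisj f).symm
      _ ≤ ∫⁻ h in {h : Sp | 0 < (h : E2) 1}, f h ∂μ := lintegral_mono_set hsub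
  exact top_le_iff.mp key
end

section
/- (Direction-measure bound (5.1), basis of Proposition 2.3 for d ≥ 4.) Let d ≥ 2 and M > 0, and let T = {y ∈ ℝ^d : ‖y − (y·e₁)e₁‖ ≤ M} be the closed infinite cylinder of radius M about the first coordinate axis. Then there exists a constant C > 0, depending only on M and d, such that for every x ∈ T and every h ≥ 1, the (d−1)-dimensional Hausdorff measure of the set of directions {s ∈ S^{d−1} : x + h s ∈ T} is at most C h^{−(d−1)}. -/
open MeasureTheory Metric
open scoped ENNReal NNReal

/-- Graph map: insert `σ√(1-‖v‖²)` at coordinate `i`. -/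
noncomputable def gmap (m : ℕ) (i : Fin (m+2)) (σ : ℝ) (v : EuclideanSpace ℝ (Fin (m+1))) :
    EuclideanSpace ℝ (Fin (m+2)) :=
  WithLp.toLp 2 (Fin.insertNth i (σ * Real.sqrt (1 - ‖v‖^2)) (WithLp.ofLp v))

lemma esp_norm_sq {n : ℕ} (y : EuclideanSpace ℝ (Fin n)) : ‖y‖^2 = ∑ i, (y i)^2 := by
  rw [EuclideanSpace.norm_eq, Real.sq_sqrt (by positivity)]
  simp [Real.norm_eq_abs, sq_abs]

lemma sqrt_diff_le {a b c : ℝ} (hc : 0 < c) (ha : c ≤ a) (hb : c ≤ b) :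
    |Real.sqrt a - Real.sqrt b| ≤ |a - b| / Real.sqrt c := by
  have h0c : (0:ℝ) < Real.sqrt c := Real.sqrt_pos.2 hc
  rw [le_div_iff₀ h0c]
  have hprod : (Real.sqrt a - Real.sqrt b) * (Real.sqrt a + Real.sqrt b) = a - b := by
    have ha' := Real.sq_sqrt (hc.le.trans ha)
    have hb' := Real.sq_sqrt (hc.le.trans hb)
    nlinarith
  have habs : |Real.sqrt a + Real.sqrt b| = Real.sqrt a + Real.sqrt b :=
    abs_of_nonneg (by positivity)
  calc |Real.sqrt a - Real.sqrt b| * Real.sqrt c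
      ≤ |Real.sqrt a - Real.sqrt b| * (Real.sqrt a + Real.sqrt b) := by
        apply mul_le_mul_of_nonneg_left _ (abs_nonneg _)
        have h1 := Real.sqrt_le_sqrt ha
        have h2 := Real.sqrt_nonneg b
        linarith
    _ = |a - b| := by rw [← habs, ← abs_mul, hprod]

lemma gmap_sub_normsq (m : ℕ) (i : Fin (m+2)) (σ : ℝ)
    (u v : EuclideanSpace ℝ (Fin (m+1))) :
    ‖gmap m i σ u - gmap m i σ v‖^2
      = (σ * Real.sqrt (1 - ‖u‖^2) - σ * Real.sqrt (1 - ‖v‖^2))^2 + ‖u - v‖^2 := by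
  rw [esp_norm_sq (gmap m i σ u - gmap m i σ v), Fin.sum_univ_succAbove _ i,
    esp_norm_sq (u - v)]
  simp [gmap]

lemma gmap_lip (m : ℕ) (i : Fin (m+2)) (σ : ℝ) (hσ : |σ| = 1) {r : ℝ} (hr0 : 0 ≤ r) (hr : r < 1) :
    LipschitzOnWith (Real.toNNReal (1 + 2 / Real.sqrt (1 - r^2))) (gmap m i σ)
      (closedBall (0 : EuclideanSpace ℝ (Fin (m+1))) r) := by
  have hc : (0:ℝ) < 1 - r^2 := by nlinarith
  have hsc : (0:ℝ) < Real.sqrt (1 - r^2) := Real.sqrt_pos.2 hc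
  apply LipschitzOnWith.of_dist_le_mul
  intro u hu v hv
  rw [mem_closedBall, dist_zero_right] at hu hv
  rw [dist_eq_norm, dist_eq_norm,
    Real.coe_toNNReal _ (by positivity : (0:ℝ) ≤ 1 + 2 / Real.sqrt (1 - r^2))]
  set c : ℝ := 2 / Real.sqrt (1 - r^2) with hcdef
  have hc0 : 0 ≤ c := by positivity
  have hda : |σ * Real.sqrt (1 - ‖u‖^2) - σ * Real.sqrt (1 - ‖v‖^2)| ≤ c * ‖u - v‖ := by
    rw [← mul_sub, abs_mul, hσ, one_mul]
    have h1 : |(1 - ‖u‖^2) - (1 - ‖v‖^2)| ≤ 2 * ‖u - v‖ := by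
      have he : (1 - ‖u‖^2) - (1 - ‖v‖^2) = (‖v‖ - ‖u‖) * (‖v‖ + ‖u‖) := by ring
      rw [he, abs_mul, abs_of_nonneg (by positivity : (0:ℝ) ≤ ‖v‖ + ‖u‖)]
      have h2 : |‖v‖ - ‖u‖| ≤ ‖u - v‖ := by
        rw [abs_sub_comm]; exact abs_norm_sub_norm_le u v
      have h3 : ‖v‖ + ‖u‖ ≤ 2 := by linarith [hr.le, hu.trans hr.le, hv.trans hr.le]
      calc |‖v‖ - ‖u‖| * (‖v‖ + ‖u‖) ≤ ‖u - v‖ * 2 :=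
            mul_le_mul h2 h3 (by positivity) (norm_nonneg _)
        _ = 2 * ‖u - v‖ := by ring
    have h4 := sqrt_diff_le hc
      (by nlinarith [pow_le_pow_left₀ (norm_nonneg u) hu 2] : 1 - r^2 ≤ 1 - ‖u‖^2)
      (by nlinarith [pow_le_pow_left₀ (norm_nonneg v) hv 2] : 1 - r^2 ≤ 1 - ‖v‖^2)
    calc |Real.sqrt (1 - ‖u‖^2) - Real.sqrt (1 - ‖v‖^2)|
        ≤ |(1 - ‖u‖^2) - (1 - ‖v‖^2)| / Real.sqrt (1 - r^2) := h4
      _ ≤ (2 * ‖u - v‖) / Real.sqrt (1 - r^2) := by gcongr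
      _ = c * ‖u - v‖ := by rw [hcdef]; ring
  have hsq := gmap_sub_normsq m i σ u v
  nlinarith [norm_nonneg (gmap m i σ u - gmap m i σ v), norm_nonneg (u - v),
    abs_nonneg (σ * Real.sqrt (1 - ‖u‖^2) - σ * Real.sqrt (1 - ‖v‖^2)),
    sq_abs (σ * Real.sqrt (1 - ‖u‖^2) - σ * Real.sqrt (1 - ‖v‖^2)),
    mul_le_mul hda hda (abs_nonneg _) (by positivity : (0:ℝ) ≤ c * ‖u - v‖)]

lemma gmap_cover (m : ℕ) (i : Fin (m+2)) (y : EuclideanSpace ℝ (Fin (m+2))) (hy : ‖y‖ = 1)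
    {r : ℝ} (hr0 : 0 ≤ r) (hr : (∑ k, (y (i.succAbove k))^2) ≤ r^2) :
    y ∈ gmap m i 1 '' closedBall 0 r ∪ gmap m i (-1) '' closedBall 0 r := by
  set v : EuclideanSpace ℝ (Fin (m+1)) := WithLp.toLp 2 (fun k => y (i.succAbove k)) with hvdef
  have hv2 : ‖v‖^2 = ∑ k, (y (i.succAbove k))^2 := by rw [esp_norm_sq]
  have hvr : ‖v‖ ≤ r := by nlinarith [norm_nonneg v]
  have hvb : v ∈ closedBall (0 : EuclideanSpace ℝ (Fin (m+1))) r := by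
    simpa [mem_closedBall, dist_zero_right] using hvr
  have h1 : 1 - ‖v‖^2 = (y i)^2 := by
    have hy2 : ‖y‖^2 = 1 := by rw [hy]; norm_num
    rw [esp_norm_sq, Fin.sum_univ_succAbove _ i] at hy2
    rw [hv2]; linarith
  have hs : Real.sqrt (1 - ‖v‖^2) = |y i| := by rw [h1, Real.sqrt_sq_eq_abs]
  have hins : WithLp.toLp 2 (Fin.insertNth i (y i) (WithLp.ofLp v)) = y :=
    congrArg (WithLp.toLp 2) (Fin.insertNth_self_removeNth i (WithLp.ofLp y))
  rcases le_or_gt 0 (y i) with hyi | hyi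
  · left
    exact ⟨v, hvb, by rw [gmap, hs, one_mul, abs_of_nonneg hyi, hins]⟩
  · right
    refine ⟨v, hvb, ?_⟩
    rw [gmap, hs, abs_of_neg hyi, show -1 * -y i = y i by ring, hins]

lemma proj_norm_sq (m : ℕ) (y : EuclideanSpace ℝ (Fin (m+2))) :
    ‖y - y 0 • EuclideanSpace.single (0 : Fin (m+2)) (1:ℝ)‖^2
      = ∑ k : Fin (m+1), (y ((0 : Fin (m+2)).succAbove k))^2 := by
  rw [esp_norm_sq, Fin.sum_univ_succAbove _ 0]
  have h0 : ∀ k : Fin (m+1), (0 : Fin (m+2)).succAbove k ≠ 0 := fun k => Fin.succAbove_ne 0 k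
  simp [EuclideanSpace.single_apply, h0, Fin.succ_ne_zero]

instance haarH (m : ℕ) :
    Measure.IsAddHaarMeasure (μH[(m+1 : ℝ)] : Measure (EuclideanSpace ℝ (Fin (m+1)))) := by
  have hfr : ((Module.finrank ℝ (EuclideanSpace ℝ (Fin (m+1))) : ℕ) : ℝ) = (m+1 : ℝ) := by
    simp [finrank_euclideanSpace]
  rw [← hfr]
  infer_instance

/-- single-piece measure bound -/
lemma gmap_image_bound (m : ℕ) (i : Fin (m+2)) (σ : ℝ) (hσ : |σ| = 1) {r ρ : ℝ}
    (hρ0 : 0 ≤ ρ) (hρr : ρ ≤ r) (hr1 : r < 1) :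
    μH[(m+1:ℝ)] (gmap m i σ '' closedBall 0 ρ)
      ≤ ENNReal.ofReal ((1 + 2 / Real.sqrt (1 - r^2))^(m+1) * ρ^(m+1))
        * μH[(m+1:ℝ)] (ball (0 : EuclideanSpace ℝ (Fin (m+1))) 1) := by
  have hr0 : 0 ≤ r := hρ0.trans hρr
  set Kr : ℝ := 1 + 2 / Real.sqrt (1 - r^2) with hKr
  have hKrpos : 0 < Kr := by positivity
  have hlip := (gmap_lip m i σ hσ hr0 hr1).mono (closedBall_subset_closedBall hρr)
  have h1 := hlip.hausdorffMeasure_image_le (by positivity : (0:ℝ) ≤ (m+1:ℝ))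
  have hball : μH[(m+1:ℝ)] (closedBall (0 : EuclideanSpace ℝ (Fin (m+1))) ρ)
      = ENNReal.ofReal (ρ^(m+1))
        * μH[(m+1:ℝ)] (ball (0 : EuclideanSpace ℝ (Fin (m+1))) 1) := by
    rw [Measure.addHaar_closedBall _ _ hρ0, finrank_euclideanSpace, Fintype.card_fin]
  have hK : ((Real.toNNReal Kr : ℝ≥0∞) ^ ((m:ℝ)+1)) = ENNReal.ofReal (Kr ^ (m+1)) := by
    have he : ((m:ℝ)+1) = ((m+1:ℕ):ℝ) := by push_cast; ring
    have : (Real.toNNReal Kr : ℝ≥0∞) = ENNReal.ofReal Kr := rfl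
    rw [this, ENNReal.ofReal_rpow_of_pos hKrpos, he, Real.rpow_natCast]
  calc μH[(m+1:ℝ)] (gmap m i σ '' closedBall 0 ρ)
      ≤ (Real.toNNReal Kr : ℝ≥0∞) ^ ((m:ℝ)+1)
          * μH[(m+1:ℝ)] (closedBall (0 : EuclideanSpace ℝ (Fin (m+1))) ρ) := h1
    _ = ENNReal.ofReal (Kr ^ (m+1)) * (ENNReal.ofReal (ρ^(m+1))
          * μH[(m+1:ℝ)] (ball (0 : EuclideanSpace ℝ (Fin (m+1))) 1)) := by rw [hK, hball]
    _ = ENNReal.ofReal (Kr^(m+1) * ρ^(m+1))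
          * μH[(m+1:ℝ)] (ball (0 : EuclideanSpace ℝ (Fin (m+1))) 1) := by
        rw [ENNReal.ofReal_mul (by positivity), mul_assoc]

/-- **Direction-measure bound (5.1)** (`d ≥ 2`, written as `d = m + 2`): if `T` is the
closed infinite cylinder of radius `M` about the first coordinate axis in `ℝ^{m+2}`,
there is a constant `C > 0` depending only on `M` and the dimension such that for every
`x ∈ T` and every `h ≥ 1`, the `(m+1)`-dimensional Hausdorff measure of the set of
directions `s` on the unit sphere with `x + h s ∈ T` is at most `C h^{-(m+1)}`. -/
theorem direction_measure_bound_cylinder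
    (m : ℕ) (M : ℝ) (hM : 0 < M)
    (T : Set (EuclideanSpace ℝ (Fin (m + 2))))
    (hT : T = {y : EuclideanSpace ℝ (Fin (m + 2)) |
      ‖y - y 0 • EuclideanSpace.single (0 : Fin (m + 2)) (1 : ℝ)‖ ≤ M}) :
    ∃ C : ℝ, 0 < C ∧ ∀ x ∈ T, ∀ h : ℝ, 1 ≤ h →
      (μH[(m + 1 : ℝ)] {s : Metric.sphere (0 : EuclideanSpace ℝ (Fin (m + 2))) 1 |
          x + h • (s : EuclideanSpace ℝ (Fin (m + 2))) ∈ T})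
        ≤ ENNReal.ofReal (C / h ^ (m + 1)) := by
  classical
  set V : ℝ≥0∞ := μH[(m+1:ℝ)] (ball (0 : EuclideanSpace ℝ (Fin (m+1))) 1) with hVdef
  have hVfin : V ≠ ⊤ := by
    refine ne_of_lt (lt_of_le_of_lt (measure_mono ball_subset_closedBall) ?_)
    exact (isCompact_closedBall (0 : EuclideanSpace ℝ (Fin (m+1))) 1).measure_lt_top
  set Vr : ℝ := V.toReal with hVrdef
  have hVr0 : 0 ≤ Vr := ENNReal.toReal_nonneg
  have hVle : V ≤ ENNReal.ofReal (Vr + 1) := by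
    rw [← ENNReal.ofReal_toReal hVfin]
    exact ENNReal.ofReal_le_ofReal (by linarith)
  set K1 : ℝ := 1 + 2 / Real.sqrt (1 - (1/2:ℝ)^2) with hK1def
  have hK1pos : 0 < K1 := by positivity
  set r0 : ℝ := Real.sqrt (((m:ℝ)+1)/((m:ℝ)+2)) with hr0def
  have hr00 : 0 ≤ r0 := Real.sqrt_nonneg _
  have hr0sq : r0 ^ 2 = ((m:ℝ)+1)/((m:ℝ)+2) := Real.sq_sqrt (by positivity)
  have hr01 : r0 < 1 := by
    rw [show (1:ℝ) = Real.sqrt 1 by rw [Real.sqrt_one]]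
    apply Real.sqrt_lt_sqrt (by positivity)
    rw [div_lt_one (by positivity)]
    linarith
  set K2 : ℝ := 1 + 2 / Real.sqrt (1 - r0^2) with hK2def
  have hK2pos : 0 < K2 := by positivity
  set C : ℝ := 2 * K1^(m+1) * (2*M)^(m+1) * (Vr + 1)
      + 2*((m:ℝ)+2) * K2^(m+1) * (Vr + 1) * (4*M)^(m+1) with hCdef
  have hC2nn : 0 ≤ 2*((m:ℝ)+2) * K2^(m+1) * (Vr + 1) * (4*M)^(m+1) := by positivity
  have hCpos : 0 < C := by positivity
  refine ⟨C, hCpos, ?_⟩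
  intro x hx h hh
  have hh0 : 0 < h := lt_of_lt_of_le one_pos hh
  have hhp : 0 < h^(m+1) := by positivity
  set A := {s : Metric.sphere (0 : EuclideanSpace ℝ (Fin (m + 2))) 1 |
          x + h • (s : EuclideanSpace ℝ (Fin (m + 2))) ∈ T} with hA
  have hiso : μH[(m+1 : ℝ)] A
      = μH[(m+1:ℝ)] (((↑) : _ → EuclideanSpace ℝ (Fin (m+2))) '' A) :=
    (isometry_subtype_coe.hausdorffMeasure_image (Or.inl (by positivity)) A).symm
  rw [hiso]
  -- the key geometric fact: points of `A` have small tail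
  have htail : ∀ s : Metric.sphere (0 : EuclideanSpace ℝ (Fin (m + 2))) 1, s ∈ A →
      ∑ k : Fin (m+1), (((s : EuclideanSpace ℝ (Fin (m+2)))) ((0 : Fin (m+2)).succAbove k))^2
        ≤ (2*M/h)^2 := by
    intro s hs
    set y : EuclideanSpace ℝ (Fin (m+2)) := (s : EuclideanSpace ℝ (Fin (m+2))) with hydef
    have hsT : x + h • y ∈ T := hs
    rw [hT] at hsT hx
    have hlin : (x + h • y) - ((x + h • y) 0) • EuclideanSpace.single (0 : Fin (m+2)) (1:ℝ)
        = (x - x 0 • EuclideanSpace.single (0 : Fin (m+2)) (1:ℝ))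
          + h • (y - y 0 • EuclideanSpace.single (0 : Fin (m+2)) (1:ℝ)) := by
      have happ : (x + h • y) 0 = x 0 + h * y 0 := by simp
      rw [happ]; module
    set Px := x - x 0 • EuclideanSpace.single (0 : Fin (m+2)) (1:ℝ) with hPx
    set Py := y - y 0 • EuclideanSpace.single (0 : Fin (m+2)) (1:ℝ) with hPy
    have hPxM : ‖Px‖ ≤ M := hx
    have hPM : ‖Px + h • Py‖ ≤ M := by rw [← hlin]; exact hsT
    have hPyn : ‖h • Py‖ ≤ 2*M := by
      have : h • Py = (Px + h • Py) - Px := by abel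
      rw [this]
      calc ‖(Px + h • Py) - Px‖ ≤ ‖Px + h • Py‖ + ‖Px‖ := norm_sub_le _ _
        _ ≤ 2*M := by linarith
    have hPyn' : ‖Py‖ ≤ 2*M/h := by
      rw [norm_smul, Real.norm_eq_abs, abs_of_pos hh0] at hPyn
      rw [le_div_iff₀ hh0]; linarith [hPyn]
    calc ∑ k : Fin (m+1), (y ((0 : Fin (m+2)).succAbove k))^2
        = ‖Py‖^2 := (proj_norm_sq m y).symm
      _ ≤ (2*M/h)^2 := pow_le_pow_left₀ (norm_nonneg _) hPyn' 2
  have hnorm1 : ∀ s : Metric.sphere (0 : EuclideanSpace ℝ (Fin (m + 2))) 1,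
      ‖(s : EuclideanSpace ℝ (Fin (m+2)))‖ = 1 := fun s => by
    have := s.2
    rwa [mem_sphere_zero_iff_norm] at this
  rcases le_or_gt (4*M) h with hcase | hcase
  · -- Case 1 : h large, two caps of radius ρ = 2M/h ≤ 1/2
    set ρ : ℝ := 2*M/h with hρdef
    have hρ0 : 0 ≤ ρ := by positivity
    have hρhalf : ρ ≤ 1/2 := by
      rw [hρdef, div_le_iff₀ hh0]; linarith
    have hcover : (((↑) : _ → EuclideanSpace ℝ (Fin (m+2))) '' A)
        ⊆ gmap m 0 1 '' closedBall 0 ρ ∪ gmap m 0 (-1) '' closedBall 0 ρ := by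
      rintro _ ⟨s, hs, rfl⟩
      exact gmap_cover m 0 _ (hnorm1 s) hρ0 (htail s hs)
    have hhalf : (0:ℝ) ≤ (1/2:ℝ) := by norm_num
    have hb1 := gmap_image_bound m 0 1 (by norm_num) hρ0 hρhalf (by norm_num : (1/2:ℝ) < 1)
    have hb2 := gmap_image_bound m 0 (-1) (by norm_num) hρ0 hρhalf (by norm_num : (1/2:ℝ) < 1)
    have hbound : ENNReal.ofReal (K1^(m+1) * ρ^(m+1)) * V
        ≤ ENNReal.ofReal (K1^(m+1) * ρ^(m+1) * (Vr+1)) := by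
      calc ENNReal.ofReal (K1^(m+1) * ρ^(m+1)) * V
          ≤ ENNReal.ofReal (K1^(m+1) * ρ^(m+1)) * ENNReal.ofReal (Vr+1) :=
            mul_le_mul_right  hVle _
        _ = ENNReal.ofReal (K1^(m+1) * ρ^(m+1) * (Vr+1)) := by
            rw [← ENNReal.ofReal_mul (by positivity)]
    calc μH[(m+1:ℝ)] (((↑) : _ → EuclideanSpace ℝ (Fin (m+2))) '' A)
        ≤ μH[(m+1:ℝ)] (gmap m 0 1 '' closedBall 0 ρ ∪ gmap m 0 (-1) '' closedBall 0 ρ) :=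
          measure_mono hcover
      _ ≤ μH[(m+1:ℝ)] (gmap m 0 1 '' closedBall 0 ρ)
            + μH[(m+1:ℝ)] (gmap m 0 (-1) '' closedBall 0 ρ) := measure_union_le _ _
      _ ≤ ENNReal.ofReal (K1^(m+1) * ρ^(m+1) * (Vr+1))
            + ENNReal.ofReal (K1^(m+1) * ρ^(m+1) * (Vr+1)) :=
          add_le_add (hb1.trans hbound) (hb2.trans hbound)
      _ = ENNReal.ofReal (2 * (K1^(m+1) * ρ^(m+1) * (Vr+1))) := by
          rw [← ENNReal.ofReal_add (by positivity) (by positivity)]; ring_nf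
      _ ≤ ENNReal.ofReal (C / h ^ (m + 1)) := by
          apply ENNReal.ofReal_le_ofReal
          have hρpow : ρ^(m+1) = (2*M)^(m+1) / h^(m+1) := div_pow _ _ _
          rw [hρpow]
          rw [show 2 * (K1^(m+1) * ((2*M)^(m+1) / h^(m+1)) * (Vr+1))
              = (2 * K1^(m+1) * (2*M)^(m+1) * (Vr+1)) / h^(m+1) by ring]
          rw [hCdef]
          gcongr
          linarith [hC2nn]
  · -- Case 2 : h < 4M, cover the whole sphere by 2(m+2) graph pieces
    have hcover : (((↑) : _ → EuclideanSpace ℝ (Fin (m+2))) '' A)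
        ⊆ ⋃ q : Fin (m+2) × Bool, gmap m q.1 (cond q.2 1 (-1)) '' closedBall 0 r0 := by
      rintro _ ⟨s, hs, rfl⟩
      set y : EuclideanSpace ℝ (Fin (m+2)) := (s : EuclideanSpace ℝ (Fin (m+2))) with hy
      have hy1 : ‖y‖ = 1 := hnorm1 s
      have hsum1 : ∑ j, (y j)^2 = 1 := by
        rw [← esp_norm_sq, hy1]; norm_num
      have hex : ∃ i : Fin (m+2), 1/((m:ℝ)+2) ≤ (y i)^2 := by
        by_contra hcon
        push_neg at hcon
        have hsum : ∑ j, (y j)^2 < ∑ _j : Fin (m+2), 1/((m:ℝ)+2) :=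
          Finset.sum_lt_sum_of_nonempty Finset.univ_nonempty (fun j _ => hcon j)
        rw [Finset.sum_const, Finset.card_univ, Fintype.card_fin, hsum1] at hsum
        have hone : ((m+2 : ℕ)) • (1/((m:ℝ)+2)) = 1 := by
          rw [nsmul_eq_mul]; push_cast; field_simp
        rw [hone] at hsum
        exact lt_irrefl _ hsum
      obtain ⟨i, hi⟩ := hex
      have hsub : ∑ k, (y (i.succAbove k))^2 ≤ r0^2 := by
        have h2 : (y i)^2 + ∑ k, (y (i.succAbove k))^2 = 1 := by
          rw [← hsum1, Fin.sum_univ_succAbove _ i]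
        rw [hr0sq]
        have h3 : ((m:ℝ)+1)/((m:ℝ)+2) = 1 - 1/((m:ℝ)+2) := by field_simp; ring
        rw [h3]; linarith
      rcases gmap_cover m i y hy1 hr00 hsub with hmem | hmem
      · exact Set.mem_iUnion.2 ⟨(i, true), by simpa using hmem⟩
      · exact Set.mem_iUnion.2 ⟨(i, false), by simpa using hmem⟩
    have hone : ∀ q : Fin (m+2) × Bool, |cond q.2 (1:ℝ) (-1)| = 1 := by
      rintro ⟨i, b⟩; cases b <;> simp
    have hpiece : ∀ q : Fin (m+2) × Bool,
        μH[(m+1:ℝ)] (gmap m q.1 (cond q.2 1 (-1)) '' closedBall 0 r0)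
          ≤ ENNReal.ofReal (K2^(m+1) * (Vr+1)) := by
      intro q
      have hb := gmap_image_bound m q.1 _ (hone q) hr00 (le_refl r0) hr01
      have hr0p : r0^(m+1) ≤ 1 := pow_le_one₀ hr00 hr01.le
      calc μH[(m+1:ℝ)] (gmap m q.1 (cond q.2 1 (-1)) '' closedBall 0 r0)
          ≤ ENNReal.ofReal (K2^(m+1) * r0^(m+1)) * ENNReal.ofReal (Vr+1) :=
            hb.trans (mul_le_mul_right  hVle _)
        _ ≤ ENNReal.ofReal (K2^(m+1)) * ENNReal.ofReal (Vr+1) := by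
            apply mul_le_mul_left
            apply ENNReal.ofReal_le_ofReal
            nlinarith [pow_pos hK2pos (m+1)]
        _ = ENNReal.ofReal (K2^(m+1) * (Vr+1)) := by
            rw [← ENNReal.ofReal_mul (by positivity)]
    have h4p : h^(m+1) ≤ (4*M)^(m+1) := pow_le_pow_left₀ hh0.le hcase.le _
    have h4Mp : (0:ℝ) < (4*M)^(m+1) := by positivity
    calc μH[(m+1:ℝ)] (((↑) : _ → EuclideanSpace ℝ (Fin (m+2))) '' A)
        ≤ μH[(m+1:ℝ)] (⋃ q : Fin (m+2) × Bool,
            gmap m q.1 (cond q.2 1 (-1)) '' closedBall 0 r0) := measure_mono hcover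
      _ ≤ ∑ q : Fin (m+2) × Bool,
            μH[(m+1:ℝ)] (gmap m q.1 (cond q.2 1 (-1)) '' closedBall 0 r0) :=
          measure_iUnion_fintype_le _ _
      _ ≤ ∑ _q : Fin (m+2) × Bool, ENNReal.ofReal (K2^(m+1) * (Vr+1)) :=
          Finset.sum_le_sum (fun q _ => hpiece q)
      _ = (((m+2)*2 : ℕ) : ℝ≥0∞) * ENNReal.ofReal (K2^(m+1) * (Vr+1)) := by
          rw [Finset.sum_const, Finset.card_univ, nsmul_eq_mul]
          norm_num [Fintype.card_prod]
      _ = ENNReal.ofReal ((((m:ℝ)+2)*2) * (K2^(m+1) * (Vr+1))) := by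
          rw [← ENNReal.ofReal_natCast ((m+2)*2), ← ENNReal.ofReal_mul (by positivity)]
          norm_num
      _ ≤ ENNReal.ofReal (C / h ^ (m + 1)) := by
          apply ENNReal.ofReal_le_ofReal
          have heq : (((m:ℝ)+2)*2) * (K2^(m+1) * (Vr+1))
              = (2*((m:ℝ)+2) * K2^(m+1) * (Vr + 1) * (4*M)^(m+1)) / (4*M)^(m+1) := by
            field_simp
          rw [heq]
          calc (2*((m:ℝ)+2) * K2^(m+1) * (Vr + 1) * (4*M)^(m+1)) / (4*M)^(m+1)
              ≤ (2*((m:ℝ)+2) * K2^(m+1) * (Vr + 1) * (4*M)^(m+1)) / h^(m+1) := by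
                gcongr
            _ ≤ C / h^(m+1) := by
                rw [hCdef]
                gcongr
                have h1nn : 0 ≤ 2 * K1^(m+1) * (2*M)^(m+1) * (Vr + 1) := by positivity
                linarith
end
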